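/- arXiv:1004.2939 — 3 statements merged into one kernel-verified Lean document; each statement's English description precedes it below -/
import Mathlib

section
/- Let d ≥ 1 be an integer, a ≥ 0 and C ≥ 0 real, ρ₀ ≥ 2 real, and set ρ_n := 2^n ρ₀ for n ∈ ℕ. Let M be a positive integer with M ≥ 12(a + 1). Let f : ℝ → ℝ and c ∈ ℝ. Assume that for every n ∈ ℕ there exist real numbers e_{j,p}(n), for integers −d+1 ≤ j ≤ 6M and 0 ≤ p ≤ d−1, such that |e_{j,p}(n)| ≤ C·ρ_n^{2j/3 + a} for all j, p, and such that |f(ρ) − c·ρ^d − Σ_{p=0}^{d−1} Σ_{j=−d+1}^{6M} e_{j,p}(n)·ρ^{−j}·(ln ρ)^p| ≤ C·ρ_n^{−M} for every ρ ∈ [ρ_n, 4ρ_n]. Then there exist real numbers e_{j,p} (for −d+1 ≤ j ≤ ⌊M/6⌋, 0 ≤ p ≤ d−1) and a constant C' ≥ 0 such that for all ρ ≥ ρ₀: |f(ρ) − c·ρ^d − Σ_{p=0}^{d−1} Σ_{j=−d+1}^{⌊M/6⌋} e_{j,p}·ρ^{−j}·(ln ρ)^p| ≤ C'·ρ^{−M/6}.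 -/
open Real Filter

lemma log_le_rpow_div {x δ : ℝ} (hx : 1 ≤ x) (hδ : 0 < δ) :
    Real.log x ≤ x ^ δ / δ := by
  have hx0 : 0 < x := lt_of_lt_of_le one_pos hx
  have h1 : Real.log (x ^ δ) = δ * Real.log x := Real.log_rpow hx0 δ
  have h2 : Real.log (x ^ δ) ≤ x ^ δ - 1 := Real.log_le_sub_one_of_pos (Real.rpow_pos_of_pos hx0 δ)
  have := h1 ▸ h2
  rw [div_eq_inv_mul]
  nlinarith [inv_pos.mpr hδ, Real.rpow_pos_of_pos hx0 δ, mul_le_mul_of_nonneg_left this (le_of_lt (inv_pos.mpr hδ)), mul_inv_cancel₀ (ne_of_gt hδ)]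

-- absorb (log x)^k into cl * x^(1/12)
lemma logpow_absorb (k : ℕ) : ∃ cl : ℝ, 0 ≤ cl ∧ ∀ x : ℝ, 2 ≤ x →
    (Real.log x) ^ k ≤ cl * x ^ ((1:ℝ)/12) := by
  set δ : ℝ := 1 / (12 * (k + 1)) with hδdef
  have hδ : 0 < δ := by positivity
  refine ⟨(1/δ) ^ k, by positivity, fun x hx => ?_⟩
  have hx1 : (1:ℝ) ≤ x := by linarith
  have hlx : 0 ≤ Real.log x := Real.log_nonneg hx1
  have h1 : (Real.log x) ^ k ≤ (x ^ δ / δ) ^ k :=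
    pow_le_pow_left₀ hlx (log_le_rpow_div hx1 hδ) k
  have h2 : (x ^ δ / δ) ^ k = (1/δ)^k * (x ^ δ) ^ k := by
    rw [div_eq_mul_one_div, mul_pow]; ring
  have h3 : (x ^ δ) ^ k = x ^ (δ * k) := by
    rw [← Real.rpow_natCast (x ^ δ) k, ← Real.rpow_mul (by linarith)]
  have h4 : x ^ (δ * k) ≤ x ^ ((1:ℝ)/12) := by
    apply Real.rpow_le_rpow_of_exponent_le hx1
    rw [hδdef]
    rw [div_mul_eq_mul_div, one_mul, div_le_div_iff₀ (by positivity) (by norm_num)]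
    push_cast; nlinarith [Nat.cast_nonneg (α := ℝ) k]
  calc (Real.log x) ^ k ≤ (1/δ)^k * (x ^ δ) ^ k := by rw [← h2]; exact h1
  _ = (1/δ)^k * x ^ (δ * k) := by rw [h3]
  _ ≤ (1/δ)^k * x ^ ((1:ℝ)/12) := by
      apply mul_le_mul_of_nonneg_left h4 (by positivity)

lemma exp_zpow (s : ℝ) (m : ℤ) : (Real.exp s) ^ m = Real.exp (m * s) := by
  rcases m with n | n
  · simp [Real.exp_nat_mul]
  · rw [zpow_negSucc, ← Real.exp_nat_mul,
      show ((Int.negSucc n : ℝ)) = -((n+1 : ℕ) : ℝ) by push_cast [Int.negSucc_eq]; ring,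
      neg_mul, Real.exp_neg]

lemma tendsto_pow_mul_exp_neg_int_mul (q : ℕ) (a : ℤ) (ha : 0 < a) :
    Tendsto (fun s : ℝ => s ^ q * Real.exp (-(a:ℝ) * s)) atTop (nhds 0) := by
  have h0 : Tendsto (fun y : ℝ => y ^ q * Real.exp (-y)) atTop (nhds 0) :=
    tendsto_pow_mul_exp_neg_atTop_nhds_zero q
  have ha' : (0:ℝ) < a := by exact_mod_cast ha
  have hcomp : Tendsto (fun s : ℝ => ((a:ℝ)*s) ^ q * Real.exp (-((a:ℝ)*s))) atTop (nhds 0) :=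
    h0.comp (Filter.tendsto_atTop_atTop_of_monotone (fun x y hxy => by nlinarith)
      (fun b => ⟨b / a + 1, by nlinarith [div_mul_cancel₀ b (ne_of_gt ha')]⟩) )
  have := hcomp.const_mul (((a:ℝ))⁻¹ ^ q)
  rw [mul_zero] at this
  apply this.congr
  intro s
  rw [mul_pow]
  field_simp
  ring_nf
  rw [← mul_pow, mul_inv_cancel₀ (ne_of_gt ha'), one_pow, one_mul]

lemma expPoly_indep (S : Finset (ℤ × ℕ)) (c : ℤ × ℕ → ℝ)
    (h : ∀ s ∈ Set.Icc (0:ℝ) (Real.log 2),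
      ∑ x ∈ S, c x * Real.exp (-(x.1:ℝ) * s) * s ^ x.2 = 0) :
    ∀ x ∈ S, c x = 0 := by
  set F : ℝ → ℝ := fun s => ∑ x ∈ S, c x * Real.exp (-(x.1:ℝ) * s) * s ^ x.2 with hF
  -- F is analytic on ℝ
  have hFan : AnalyticOnNhd ℝ F Set.univ := by
    apply Finset.analyticOnNhd_fun_sum
    intro x _
    exact ((analyticOnNhd_const.mul
      ((analyticOnNhd_const.mul analyticOnNhd_id).rexp)).mul (analyticOnNhd_id.pow x.2))
  -- F vanishes near (log 2)/2
  have hl2 : (0:ℝ) < Real.log 2 := Real.log_pos (by norm_num)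
  have hz₀ : F =ᶠ[nhds (Real.log 2 / 2)] 0 := by
    have hmem : Set.Icc (0:ℝ) (Real.log 2) ∈ nhds (Real.log 2 / 2) := by
      apply Icc_mem_nhds <;> linarith
    filter_upwards [hmem] with s hs
    exact h s hs
  have hF0 : ∀ s : ℝ, F s = 0 := by
    have := hFan.eqOn_zero_of_preconnected_of_eventuallyEq_zero
      isPreconnected_univ (Set.mem_univ (Real.log 2 / 2)) hz₀
    intro s; exact this (Set.mem_univ s)
  -- coefficient extraction
  by_contra hcon
  push_neg at hcon
  obtain ⟨y, hyS, hyc⟩ := hcon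
  set S' : Finset (ℤ × ℕ) := S.filter (fun x => c x ≠ 0) with hS'
  have hS'ne : S'.Nonempty := ⟨y, Finset.mem_filter.mpr ⟨hyS, hyc⟩⟩
  set j₀ : ℤ := (S'.image Prod.fst).min' (hS'ne.image _) with hj₀
  set Sj : Finset (ℤ × ℕ) := S'.filter (fun x => x.1 = j₀) with hSj
  have hSjne : Sj.Nonempty := by
    obtain ⟨j, hj⟩ := Finset.mem_image.mp ((S'.image Prod.fst).min'_mem (hS'ne.image _))
    exact ⟨j, Finset.mem_filter.mpr ⟨hj.1, hj.2⟩⟩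
  set q₀ : ℕ := (Sj.image Prod.snd).max' (hSjne.image _) with hq₀
  have hx₀Sj : (j₀, q₀) ∈ Sj := by
    obtain ⟨x, hx, hx2⟩ := Finset.mem_image.mp ((Sj.image Prod.snd).max'_mem (hSjne.image _))
    have := (Finset.mem_filter.mp hx).2
    have : x = (j₀, q₀) := by
      apply Prod.ext
      · exact this
      · exact hx2
    rwa [this] at hx
  have hx₀S' : (j₀, q₀) ∈ S' := (Finset.mem_filter.mp hx₀Sj).1
  have hx₀S : (j₀, q₀) ∈ S := (Finset.mem_filter.mp hx₀S').1
  have hx₀c : c (j₀, q₀) ≠ 0 := (Finset.mem_filter.mp hx₀S').2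
  -- the rescaled function
  set G : ℝ → ℝ := fun s => F s * Real.exp ((j₀:ℝ) * s) / s ^ q₀ with hG
  have hG0 : ∀ s, G s = 0 := fun s => by simp [hG, hF0 s]
  -- G equals sum of terms
  set T : ℤ × ℕ → ℝ → ℝ :=
    fun x s => c x * Real.exp (((j₀:ℝ) - x.1) * s) * s ^ x.2 / s ^ q₀ with hT
  have hGeq : ∀ s : ℝ, G s = ∑ x ∈ S, T x s := by
    intro s
    show (∑ x ∈ S, c x * Real.exp (-(x.1:ℝ) * s) * s ^ x.2) * Real.exp ((j₀:ℝ) * s) / s ^ q₀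
      = ∑ x ∈ S, T x s
    rw [Finset.sum_mul, Finset.sum_div]
    apply Finset.sum_congr rfl
    intro x _
    show _ = c x * Real.exp (((j₀:ℝ) - x.1) * s) * s ^ x.2 / s ^ q₀
    rw [show ((j₀:ℝ) - x.1) * s = (-(x.1:ℝ) * s) + (j₀:ℝ) * s by ring, Real.exp_add]
    ring
  -- each term tendsto
  have hterm : ∀ x ∈ S, Tendsto (T x) atTop
      (nhds (if x = (j₀, q₀) then c x else 0)) := by
    intro x hxS
    by_cases hx0 : x = (j₀, q₀)
    · subst hx0
      simp only [if_pos rfl]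
      have : ∀ s : ℝ, 1 ≤ s → T (j₀, q₀) s = c (j₀, q₀) := by
        intro s hs
        have hs0 : s ≠ 0 := by linarith
        show c (j₀, q₀) * Real.exp (((j₀:ℝ) - (j₀, q₀).1) * s) * s ^ (j₀, q₀).2 / s ^ q₀
          = c (j₀, q₀)
        simp only [sub_self, zero_mul, Real.exp_zero]
        field_simp
      apply Tendsto.congr' _ tendsto_const_nhds
      filter_upwards [eventually_ge_atTop (1:ℝ)] with s hs
      exact (this s hs).symm
    · rw [if_neg hx0]
      by_cases hc0 : c x = 0
      · have : T x = fun _ => 0 := by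
          funext s
          show c x * Real.exp (((j₀:ℝ) - x.1) * s) * s ^ x.2 / s ^ q₀ = 0
          simp [hc0]
        rw [this]; exact tendsto_const_nhds
      · have hxS' : x ∈ S' := Finset.mem_filter.mpr ⟨hxS, hc0⟩
        have hj₀le : j₀ ≤ x.1 :=
          Finset.min'_le _ _ (Finset.mem_image_of_mem Prod.fst hxS')
        rcases lt_or_eq_of_le hj₀le with hlt | heq
        · -- j₀ < x.1 : exponential decay
          set a : ℤ := x.1 - j₀ with ha
          have ha1 : 0 < a := by omega
          have hbd : Tendsto (fun s : ℝ => |c x| * (s ^ x.2 * Real.exp (-(a:ℝ) * s)))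
              atTop (nhds 0) := by
            have := (tendsto_pow_mul_exp_neg_int_mul x.2 a ha1).const_mul |c x|
            simpa using this
          have habs : ∀ s : ℝ, 1 ≤ s →
              |T x s| ≤ |c x| * (s ^ x.2 * Real.exp (-(a:ℝ) * s)) := by
            intro s hs
            show |c x * Real.exp (((j₀:ℝ) - x.1) * s) * s ^ x.2 / s ^ q₀| ≤ _
            rw [abs_div, abs_mul, abs_mul]
            have hsq : |s ^ x.2| = s ^ x.2 := abs_of_nonneg (by positivity)
            have h1q : (1:ℝ) ≤ |s ^ q₀| := by
              rw [abs_of_nonneg (by positivity)]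
              exact one_le_pow₀ hs
            have hexp : |Real.exp (((j₀:ℝ) - x.1) * s)| = Real.exp (-(a:ℝ) * s) := by
              rw [abs_of_pos (Real.exp_pos _)]
              congr 1
              push_cast [ha]
              ring
            rw [hsq, hexp]
            calc |c x| * Real.exp (-(a:ℝ) * s) * s ^ x.2 / |s ^ q₀|
                ≤ |c x| * Real.exp (-(a:ℝ) * s) * s ^ x.2 / 1 := by
                  apply div_le_div_of_nonneg_left _ one_pos h1q <;> positivity
              _ = |c x| * (s ^ x.2 * Real.exp (-(a:ℝ) * s)) := by ring
          have hbdneg := hbd.neg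
          rw [neg_zero] at hbdneg
          apply tendsto_of_tendsto_of_tendsto_of_le_of_le' hbdneg hbd
          · filter_upwards [eventually_ge_atTop (1:ℝ)] with s hs
            exact neg_le_of_abs_le (habs s hs)
          · filter_upwards [eventually_ge_atTop (1:ℝ)] with s hs
            exact le_of_abs_le (habs s hs)
        · -- j₀ = x.1 : then x.2 < q₀
          have hxSj : x ∈ Sj := Finset.mem_filter.mpr ⟨hxS', heq.symm⟩
          have hq : x.2 ≤ q₀ := Finset.le_max' _ _ (Finset.mem_image_of_mem Prod.snd hxSj)
          have hqlt : x.2 < q₀ := by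
            rcases lt_or_eq_of_le hq with h' | h'
            · exact h'
            · exfalso; apply hx0; apply Prod.ext
              · exact heq.symm
              · exact h'
          set k : ℕ := q₀ - x.2 with hk
          have hk0 : 0 < k := by omega
          have hlim : Tendsto (fun s : ℝ => c x * (s⁻¹) ^ k) atTop (nhds 0) := by
            have := (tendsto_inv_atTop_zero (𝕜 := ℝ)).pow k
            have h2 := this.const_mul (c x)
            simpa [zero_pow hk0.ne', mul_zero] using h2
          apply hlim.congr'
          filter_upwards [eventually_ge_atTop (1:ℝ)] with s hs
          have hs0 : s ≠ 0 := by linarith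
          show c x * s⁻¹ ^ k = c x * Real.exp (((j₀:ℝ) - x.1) * s) * s ^ x.2 / s ^ q₀
          rw [← heq]
          simp only [sub_self, zero_mul, Real.exp_zero, mul_one]
          rw [show q₀ = x.2 + k by omega, pow_add]
          field_simp
          ring
          rw [← mul_pow, mul_inv_cancel₀ hs0, one_pow]
  -- conclude
  have hsum := tendsto_finset_sum S hterm
  rw [Finset.sum_ite_eq' S (j₀, q₀) c, if_pos hx₀S] at hsum
  have hzero : Tendsto (fun s => ∑ x ∈ S, T x s) atTop (nhds 0) := by
    apply Tendsto.congr _ tendsto_const_nhds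
    intro s
    rw [← hGeq s, hG0 s]
  exact hx₀c (tendsto_nhds_unique hsum hzero)



lemma expPoly_inverse_bound (S : Finset (ℤ × ℕ)) :
    ∃ K : ℝ, 0 ≤ K ∧ ∀ c : ℤ × ℕ → ℝ, ∀ B : ℝ, 0 ≤ B →
      (∀ s ∈ Set.Icc (0:ℝ) (Real.log 2),
        |∑ x ∈ S, c x * Real.exp (-(x.1:ℝ) * s) * s ^ x.2| ≤ B) →
      ∀ x ∈ S, |c x| ≤ K * B := by
  classical
  set X := C(Set.Icc (0:ℝ) (Real.log 2), ℝ)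
  have hcont : ∀ v : {x // x ∈ S} → ℝ, Continuous
      (fun s : Set.Icc (0:ℝ) (Real.log 2) =>
        ∑ x ∈ S.attach, v x * Real.exp (-(x.1.1:ℝ) * (s:ℝ)) * (s:ℝ) ^ x.1.2) := by
    intro v
    apply continuous_finset_sum
    intro x _
    exact (continuous_const.mul
      (Real.continuous_exp.comp (continuous_const.mul continuous_subtype_val))).mul
      (continuous_subtype_val.pow _)
  set T : ({x // x ∈ S} → ℝ) →ₗ[ℝ] X :=
    { toFun := fun v => ⟨fun s => ∑ x ∈ S.attach,
        v x * Real.exp (-(x.1.1:ℝ) * (s:ℝ)) * (s:ℝ) ^ x.1.2, hcont v⟩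
      map_add' := by
        intro v w
        ext s
        show (∑ x ∈ S.attach, (_ : ℝ)) = (∑ x ∈ S.attach, (_ : ℝ)) + (∑ x ∈ S.attach, (_ : ℝ))
        rw [← Finset.sum_add_distrib]
        apply Finset.sum_congr rfl
        intro x _
        show (v x + w x) * _ * _ = _
        ring
      map_smul' := by
        intro r v
        ext s
        show (∑ x ∈ S.attach, (_ : ℝ)) = r * (∑ x ∈ S.attach, (_ : ℝ))
        rw [Finset.mul_sum]
        apply Finset.sum_congr rfl
        intro x _
        show (r * v x) * _ * _ = _
        ring } with hTdef
  have hinj : Function.Injective T := by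
    rw [injective_iff_map_eq_zero]
    intro v hv
    set c' : ℤ × ℕ → ℝ := fun x => if h : x ∈ S then v ⟨x, h⟩ else 0 with hc'
    have hzero : ∀ s ∈ Set.Icc (0:ℝ) (Real.log 2),
        ∑ x ∈ S, c' x * Real.exp (-(x.1:ℝ) * s) * s ^ x.2 = 0 := by
      intro s hs
      have h1 : ∑ x ∈ S, c' x * Real.exp (-(x.1:ℝ) * s) * s ^ x.2
          = ∑ x ∈ S.attach, v x * Real.exp (-(x.1.1:ℝ) * s) * s ^ x.1.2 := by
        rw [← Finset.sum_attach S (fun x => c' x * Real.exp (-(x.1:ℝ) * s) * s ^ x.2)]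
        apply Finset.sum_congr rfl
        intro x _
        rw [hc']
        simp only [dif_pos x.2]
      rw [h1]
      have := congrFun (congrArg DFunLike.coe hv) ⟨s, hs⟩
      exact this
    have := expPoly_indep S c' hzero
    funext i
    have h2 := this i.1 i.2
    rw [hc'] at h2
    simp only [dif_pos i.2] at h2
    exact h2
  set E := LinearEquiv.ofInjective T hinj with hE
  haveI : FiniteDimensional ℝ ({x // x ∈ S} → ℝ) := inferInstance
  haveI : FiniteDimensional ℝ (LinearMap.range T) := E.finiteDimensional
  haveI : NormedSpace ℝ (LinearMap.range T) := Submodule.normedSpace _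
  obtain ⟨KT, hKT, hKTb⟩ := SemilinearMapClass.bound_of_continuous (σ₁₂ := RingHom.id ℝ) E.symm.toLinearMap
    (LinearMap.continuous_of_finiteDimensional _)
  refine ⟨KT, hKT.le, ?_⟩
  intro c B hB hbound x hxS
  set v : {x // x ∈ S} → ℝ := fun i => c i.1 with hv
  have hTvnorm : ‖T v‖ ≤ B := by
    rw [ContinuousMap.norm_le _ hB]
    intro s
    show ‖∑ x ∈ S.attach, v x * Real.exp (-(x.1.1:ℝ) * (s:ℝ)) * (s:ℝ) ^ x.1.2‖ ≤ B
    rw [Real.norm_eq_abs]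
    have h1 : ∑ x ∈ S.attach, v x * Real.exp (-(x.1.1:ℝ) * (s:ℝ)) * (s:ℝ) ^ x.1.2
        = ∑ x ∈ S, c x * Real.exp (-(x.1:ℝ) * (s:ℝ)) * (s:ℝ) ^ x.2 := by
      rw [← Finset.sum_attach S (fun x => c x * Real.exp (-(x.1:ℝ) * (s:ℝ)) * (s:ℝ) ^ x.2)]
    rw [h1]
    exact hbound s s.2
  have hvrec : v = E.symm (E v) := (E.symm_apply_apply v).symm
  have hnormEv : ‖E v‖ = ‖T v‖ := by
    rw [hE]
    rfl
  calc |c x| = |v ⟨x, hxS⟩| := rfl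
  _ ≤ ‖v‖ := by
      rw [← Real.norm_eq_abs]
      exact norm_le_pi_norm v ⟨x, hxS⟩
  _ = ‖E.symm (E v)‖ := by rw [← hvrec]
  _ ≤ KT * ‖E v‖ := hKTb (E v)
  _ = KT * ‖T v‖ := by rw [hnormEv]
  _ ≤ KT * B := mul_le_mul_of_nonneg_left hTvnorm hKT.le

lemma choose_le_two_pow' (p q : ℕ) : (p.choose q) ≤ 2 ^ p := by
  rcases le_or_gt q p with h | h
  · calc p.choose q ≤ ∑ i ∈ Finset.range (p+1), p.choose i :=
        Finset.single_le_sum (fun i _ => Nat.zero_le _) (Finset.mem_range.mpr (by omega))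
    _ = 2 ^ p := Nat.sum_range_choose p
  · rw [Nat.choose_eq_zero_of_lt h]; positivity

lemma aux_coeff_bound (d M : ℕ) (hd : 1 ≤ d) (K : ℝ) (hK0 : 0 ≤ K)
    (hKbound : ∀ c : ℤ × ℕ → ℝ, ∀ B : ℝ, 0 ≤ B →
      (∀ s ∈ Set.Icc (0:ℝ) (Real.log 2),
        |∑ x ∈ (Finset.Icc (-(d:ℤ)+1) (6*(M:ℤ)) ×ˢ Finset.range d),
          c x * Real.exp (-(x.1:ℝ) * s) * s ^ x.2| ≤ B) →
      ∀ x ∈ (Finset.Icc (-(d:ℤ)+1) (6*(M:ℤ)) ×ˢ Finset.range d), |c x| ≤ K * B)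
    (cl : ℝ) (hcl0 : 0 ≤ cl)
    (hcl : ∀ x : ℝ, 2 ≤ x → (Real.log x) ^ (d*d) ≤ cl * x ^ ((1:ℝ)/12))
    (R B : ℝ) (hR : 2 ≤ R) (hB : 0 ≤ B)
    (b : ℤ → ℕ → ℝ)
    (happrox : ∀ ρ ∈ Set.Icc (2*R) (4*R),
      |∑ p ∈ Finset.range d, ∑ j ∈ Finset.Icc (-(d:ℤ)+1) (6*(M:ℤ)),
        b j p * ρ ^ (-j) * Real.log ρ ^ p| ≤ B) :
    ∀ j ∈ Finset.Icc (-(d:ℤ)+1) (6*(M:ℤ)), ∀ p ∈ Finset.range d,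
      |b j p| ≤ (2^(6*M) * 2 * (1+(d:ℝ)*2^d)^d * cl * K * B) * R ^ ((j:ℝ) + 1/12) := by
  have hR0 : (0:ℝ) < R := by linarith
  have h2R : (2:ℝ) ≤ 2*R := by linarith
  have h2R0 : (0:ℝ) < 2*R := by linarith
  set L : ℝ := Real.log (2*R) with hLdef
  have hL1 : (1:ℝ) ≤ L := by
    rw [hLdef]
    have h4 : (4:ℝ) ≤ 2*R := by linarith
    have h1 : Real.log 4 ≤ Real.log (2*R) := Real.log_le_log (by norm_num) h4
    have hlog4 : (1:ℝ) ≤ Real.log 4 := by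
      rw [show (4:ℝ) = 2^2 by norm_num, Real.log_pow]
      push_cast
      nlinarith [Real.log_two_gt_d9]
    linarith
  have hL0 : (0:ℝ) ≤ L := by linarith
  set JS : Finset ℤ := Finset.Icc (-(d:ℤ)+1) (6*(M:ℤ)) with hJS
  set S : Finset (ℤ × ℕ) := JS ×ˢ Finset.range d with hSdef
  set c : ℤ × ℕ → ℝ := fun x =>
    ∑ p ∈ Finset.range d, b x.1 p * (2*R) ^ (-x.1) * (p.choose x.2) * L ^ (p - x.2) with hcdef
  have hckey : ∀ s ∈ Set.Icc (0:ℝ) (Real.log 2),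
      |∑ x ∈ S, c x * Real.exp (-(x.1:ℝ) * s) * s ^ x.2| ≤ B := by
    intro s hs
    set ρ : ℝ := 2*R*Real.exp s with hρdef
    have hρ0 : 0 < ρ := by positivity
    have hexp1 : (1:ℝ) ≤ Real.exp s := by
      rw [← Real.exp_zero]
      exact Real.exp_le_exp.mpr hs.1
    have hexp2 : Real.exp s ≤ 2 := by
      calc Real.exp s ≤ Real.exp (Real.log 2) := Real.exp_le_exp.mpr hs.2
      _ = 2 := Real.exp_log (by norm_num)
    have hρmem : ρ ∈ Set.Icc (2*R) (4*R) := by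
      constructor
      · rw [hρdef]; nlinarith
      · rw [hρdef]; nlinarith
    have hlogρ : Real.log ρ = L + s := by
      rw [hρdef, Real.log_mul (by positivity) (by positivity), Real.log_exp, hLdef]
    have hzpow : ∀ j : ℤ, ρ ^ (-j) = (2*R) ^ (-j) * Real.exp (-(j:ℝ) * s) := by
      intro j
      rw [hρdef, mul_zpow, exp_zpow]
      push_cast
      ring_nf
    have hbinom : ∀ p : ℕ, p < d →
        ∑ q ∈ Finset.range d, (p.choose q : ℝ) * L ^ (p - q) * s ^ q = (L + s) ^ p := by
      intro p hp
      rw [show (L + s) ^ p = (s + L) ^ p by ring, add_pow]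
      rw [← Finset.sum_subset (Finset.range_subset_range.mpr (by omega : p + 1 ≤ d))]
      · apply Finset.sum_congr rfl
        intro q _
        ring
      · intro q _ hq
        rw [Nat.choose_eq_zero_of_lt (by simp at hq ⊢; omega)]
        simp
    have hsum : ∑ x ∈ S, c x * Real.exp (-(x.1:ℝ) * s) * s ^ x.2
        = ∑ p ∈ Finset.range d, ∑ j ∈ JS, b j p * ρ ^ (-j) * Real.log ρ ^ p := by
      rw [show (∑ p ∈ Finset.range d, ∑ j ∈ JS, b j p * ρ ^ (-j) * Real.log ρ ^ p)
          = ∑ j ∈ JS, ∑ p ∈ Finset.range d, b j p * ρ ^ (-j) * Real.log ρ ^ p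
          from Finset.sum_comm]
      rw [hSdef, Finset.sum_product]
      apply Finset.sum_congr rfl
      intro j _
      calc ∑ q ∈ Finset.range d, c (j, q) * Real.exp (-((j,q).1:ℝ) * s) * s ^ (j,q).2
          = ∑ q ∈ Finset.range d, ∑ p ∈ Finset.range d,
            (b j p * (2*R) ^ (-j) * Real.exp (-(j:ℝ) * s))
              * ((p.choose q : ℝ) * L ^ (p - q) * s ^ q) := by
            apply Finset.sum_congr rfl
            intro q _
            rw [hcdef]
            simp only []
            rw [Finset.sum_mul, Finset.sum_mul]
            apply Finset.sum_congr rfl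
            intro p _
            ring
        _ = ∑ p ∈ Finset.range d, ∑ q ∈ Finset.range d,
            (b j p * (2*R) ^ (-j) * Real.exp (-(j:ℝ) * s))
              * ((p.choose q : ℝ) * L ^ (p - q) * s ^ q) := Finset.sum_comm
        _ = ∑ p ∈ Finset.range d, b j p * ρ ^ (-j) * Real.log ρ ^ p := by
            apply Finset.sum_congr rfl
            intro p hp
            rw [← Finset.mul_sum, hbinom p (Finset.mem_range.mp hp), hzpow j, hlogρ]
            ring
    rw [hsum]
    exact happrox ρ hρmem
  have hcX : ∀ x ∈ S, |c x| ≤ K * B := hKbound c B hB hckey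
  -- triangular inversion
  intro j hj p hp
  set β : ℕ → ℝ := fun p => b j p * (2*R) ^ (-j) with hβdef
  set A : ℝ := K * B with hAdef
  have hA0 : 0 ≤ A := mul_nonneg hK0 hB
  set G : ℝ := (d:ℝ) * 2^d * L^d with hGdef
  have hG0 : 0 ≤ G := by
    rw [hGdef]; positivity
  have hG1 : (1:ℝ) ≤ 1 + G := by linarith
  have hrel : ∀ q, q < d → c (j, q) = β q +
      ∑ p' ∈ (Finset.range d).erase q, β p' * (p'.choose q : ℝ) * L ^ (p' - q) := by
    intro q hq
    have h0 : c (j, q) = ∑ p' ∈ Finset.range d, β p' * (p'.choose q : ℝ) * L ^ (p' - q) := rfl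
    rw [h0, ← Finset.add_sum_erase _ _ (Finset.mem_range.mpr hq), Nat.choose_self,
      Nat.sub_self, pow_zero, Nat.cast_one, mul_one, mul_one]
  have hcjq : ∀ q, q < d → |c (j, q)| ≤ A := by
    intro q hq
    exact hcX (j, q) (Finset.mem_product.mpr ⟨hj, Finset.mem_range.mpr hq⟩)
  have hmain : ∀ k : ℕ, ∀ q, q < d → d - 1 - q ≤ k → |β q| ≤ A * (1+G)^(d-1-q) := by
    intro k
    induction k with
    | zero =>
      intro q hq hqk
      have hq' : q = d - 1 := by omega
      have hzero : ∑ p' ∈ (Finset.range d).erase q,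
          β p' * (p'.choose q : ℝ) * L ^ (p' - q) = 0 := by
        apply Finset.sum_eq_zero
        intro p' hp'
        have h1 := Finset.mem_of_mem_erase hp'
        have h2 := Finset.ne_of_mem_erase hp'
        rw [Finset.mem_range] at h1
        rw [Nat.choose_eq_zero_of_lt (by omega)]
        simp
      have := hrel q hq
      rw [hzero, add_zero] at this
      rw [← this, show d - 1 - q = 0 by omega, pow_zero, mul_one]
      exact hcjq q hq
    | succ k IH =>
      intro q hq hqk
      rcases le_or_gt (d - 1 - q) k with hk' | hk'
      · exact IH q hq hk'
      have hq2 : q < d - 1 := by omega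
      set U : ℝ := A * (1+G)^(d-2-q) * (2^d * L^d) with hUdef
      have hU0 : 0 ≤ U := by
        rw [hUdef]
        exact mul_nonneg (mul_nonneg hA0 (by positivity)) (by positivity)
      have hsumbd : |∑ p' ∈ (Finset.range d).erase q,
          β p' * (p'.choose q : ℝ) * L ^ (p' - q)| ≤ (d:ℝ) * U := by
        calc |∑ p' ∈ (Finset.range d).erase q, β p' * (p'.choose q : ℝ) * L ^ (p' - q)|
            ≤ ∑ p' ∈ (Finset.range d).erase q, |β p' * (p'.choose q : ℝ) * L ^ (p' - q)| :=
              Finset.abs_sum_le_sum_abs _ _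
          _ ≤ ∑ p' ∈ (Finset.range d).erase q, U := by
              apply Finset.sum_le_sum
              intro p' hp'
              have h1 := Finset.mem_of_mem_erase hp'
              have h2 := Finset.ne_of_mem_erase hp'
              rw [Finset.mem_range] at h1
              rcases lt_or_gt_of_ne h2 with hlt | hgt
              · -- p' < q : choose = 0
                rw [Nat.choose_eq_zero_of_lt hlt]
                simpa using hU0
              · -- p' > q
                have hβp' : |β p'| ≤ A * (1+G)^(d-1-p') := IH p' h1 (by omega)
                have hch : (p'.choose q : ℝ) ≤ 2^d := by
                  calc (p'.choose q : ℝ) ≤ ((2^p' : ℕ) : ℝ) := by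
                        exact_mod_cast choose_le_two_pow' p' q
                  _ ≤ 2^d := by
                      push_cast
                      exact pow_le_pow_right₀ one_le_two (by omega)
                have hLp : L ^ (p' - q) ≤ L^d :=
                  pow_le_pow_right₀ hL1 (by omega)
                have hpow : (1+G)^(d-1-p') ≤ (1+G)^(d-2-q) :=
                  pow_le_pow_right₀ hG1 (by omega)
                have hch0 : (0:ℝ) ≤ (p'.choose q : ℝ) := by positivity
                have hL0' : (0:ℝ) ≤ L ^ (p' - q) := by positivity
                rw [abs_mul, abs_mul, abs_of_nonneg hch0, abs_of_nonneg hL0', hUdef]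
                calc |β p'| * (p'.choose q : ℝ) * L ^ (p' - q)
                    ≤ (A * (1+G)^(d-2-q) * 2^d) * L ^ d := by
                      apply mul_le_mul _ hLp hL0' _
                      · exact mul_le_mul (hβp'.trans
                          (mul_le_mul_of_nonneg_left hpow hA0)) hch hch0
                          (mul_nonneg hA0 (by positivity))
                      · exact mul_nonneg (mul_nonneg hA0 (by positivity)) (by positivity)
                  _ = A * (1+G)^(d-2-q) * (2^d * L^d) := by ring
          _ = ((Finset.range d).erase q).card * U := by
              rw [Finset.sum_const, nsmul_eq_mul]
          _ ≤ (d:ℝ) * U := by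
              apply mul_le_mul_of_nonneg_right _ hU0
              have : ((Finset.range d).erase q).card ≤ d := by
                calc ((Finset.range d).erase q).card ≤ (Finset.range d).card :=
                      Finset.card_erase_le
                _ = d := Finset.card_range d
              exact_mod_cast this
      have hβq : |β q| ≤ A + (d:ℝ) * U := by
        have h1 := hrel q hq
        have h2 : β q = c (j, q) - ∑ p' ∈ (Finset.range d).erase q,
            β p' * (p'.choose q : ℝ) * L ^ (p' - q) := by rw [h1]; ring
        rw [h2]
        calc |c (j, q) - _| ≤ |c (j,q)| + |∑ p' ∈ (Finset.range d).erase q,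
            β p' * (p'.choose q : ℝ) * L ^ (p' - q)| := abs_sub _ _
        _ ≤ A + (d:ℝ) * U := add_le_add (hcjq q hq) hsumbd
      have hgoal : A + (d:ℝ) * U ≤ A * (1+G)^(d-1-q) := by
        have hd1q : d - 1 - q = (d - 2 - q) + 1 := by omega
        rw [hd1q, pow_succ]
        have hDU : (d:ℝ) * U = A * G * (1+G)^(d-2-q) := by
          rw [hUdef, hGdef]
          ring
        rw [hDU]
        have hge1 : (1:ℝ) ≤ (1+G)^(d-2-q) := one_le_pow₀ hG1
        nlinarith [mul_nonneg hA0 hG0, mul_nonneg (mul_nonneg hA0 hG0) (by linarith : (0:ℝ) ≤ (1+G)^(d-2-q) - 1)]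
      exact hβq.trans hgoal
  -- from β back to b
  have hβbound : |β p| ≤ A * (1+G)^d := by
    calc |β p| ≤ A * (1+G)^(d-1-p) := hmain (d-1-p) p (Finset.mem_range.mp hp) le_rfl
    _ ≤ A * (1+G)^d := mul_le_mul_of_nonneg_left (pow_le_pow_right₀ hG1 (by omega)) hA0
  have hbeq : b j p = β p * (2*R) ^ (j:ℤ) := by
    rw [hβdef]
    rw [mul_assoc, ← zpow_add₀ (ne_of_gt h2R0)]
    simp
  have hGd : (1+G)^d ≤ (1+(d:ℝ)*2^d)^d * (cl * (2*R) ^ ((1:ℝ)/12)) := by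
    have h1 : 1 + G ≤ (1+(d:ℝ)*2^d) * L^d := by
      rw [hGdef]
      have hLd : (1:ℝ) ≤ L^d := one_le_pow₀ hL1
      nlinarith [mul_nonneg (by positivity : (0:ℝ) ≤ (d:ℝ)*2^d) (by linarith : (0:ℝ) ≤ L^d - 1)]
    calc (1+G)^d ≤ ((1+(d:ℝ)*2^d) * L^d)^d := pow_le_pow_left₀ (by linarith) h1 d
    _ = (1+(d:ℝ)*2^d)^d * L^(d*d) := by rw [mul_pow, ← pow_mul]
    _ ≤ (1+(d:ℝ)*2^d)^d * (cl * (2*R) ^ ((1:ℝ)/12)) := by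
        apply mul_le_mul_of_nonneg_left (hcl (2*R) h2R) (by positivity)
  -- zpow to rpow conversions
  have hzrp : (2*R) ^ (j:ℤ) = (2:ℝ) ^ (j:ℝ) * R ^ (j:ℝ) := by
    rw [← Real.rpow_intCast (2*R) j, Real.mul_rpow (by norm_num) (le_of_lt hR0)]
  have h2j : (2:ℝ) ^ (j:ℝ) ≤ (2:ℝ)^(6*M) := by
    have hj2 : (j:ℝ) ≤ ((6*M : ℕ) : ℝ) := by
      have := (Finset.mem_Icc.mp hj).2
      push_cast
      exact_mod_cast this
    calc (2:ℝ) ^ (j:ℝ) ≤ (2:ℝ) ^ (((6*M : ℕ):ℕ) : ℝ) :=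
        Real.rpow_le_rpow_of_exponent_le one_le_two hj2
    _ = (2:ℝ)^(6*M) := by rw [Real.rpow_natCast]
  have h2Rr : (2*R) ^ ((1:ℝ)/12) ≤ 2 * R ^ ((1:ℝ)/12) := by
    rw [Real.mul_rpow (by norm_num) (le_of_lt hR0)]
    apply mul_le_mul_of_nonneg_right _ (Real.rpow_nonneg (le_of_lt hR0) _)
    calc (2:ℝ) ^ ((1:ℝ)/12) ≤ (2:ℝ) ^ (1:ℝ) :=
        Real.rpow_le_rpow_of_exponent_le one_le_two (by norm_num)
    _ = 2 := Real.rpow_one 2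
  have hzpos : (0:ℝ) < (2*R) ^ (j:ℤ) := zpow_pos h2R0 j
  calc |b j p| = |β p| * (2*R) ^ (j:ℤ) := by
        rw [hbeq, abs_mul, abs_of_pos hzpos]
  _ ≤ (A * (1+G)^d) * (2*R) ^ (j:ℤ) := mul_le_mul_of_nonneg_right hβbound (le_of_lt hzpos)
  _ ≤ (A * ((1+(d:ℝ)*2^d)^d * (cl * (2*R) ^ ((1:ℝ)/12)))) * (2*R) ^ (j:ℤ) := by
      apply mul_le_mul_of_nonneg_right _ (le_of_lt hzpos)
      exact mul_le_mul_of_nonneg_left hGd hA0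
  _ ≤ (A * ((1+(d:ℝ)*2^d)^d * (cl * (2 * R ^ ((1:ℝ)/12))))) * ((2:ℝ)^(6*M) * R ^ (j:ℝ)) := by
      rw [hzrp]
      apply mul_le_mul
      · apply mul_le_mul_of_nonneg_left _ hA0
        apply mul_le_mul_of_nonneg_left _ (by positivity)
        exact mul_le_mul_of_nonneg_left h2Rr hcl0
      · exact mul_le_mul_of_nonneg_right h2j (Real.rpow_nonneg (le_of_lt hR0) _)
      · positivity
      · exact mul_nonneg hA0 (by positivity)
  _ = (2^(6*M) * 2 * (1+(d:ℝ)*2^d)^d * cl * K * B) * (R ^ ((1:ℝ)/12) * R ^ (j:ℝ)) := by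
      rw [hAdef]
      ring
  _ = (2^(6*M) * 2 * (1+(d:ℝ)*2^d)^d * cl * K * B) * R ^ ((j:ℝ) + 1/12) := by
      rw [← Real.rpow_add hR0]
      ring_nf

lemma rpow_anti_base {x y e : ℝ} (hx : 0 < x) (hxy : x ≤ y) (he : e ≤ 0) : y ^ e ≤ x ^ e := by
  rw [← neg_neg e, Real.rpow_neg (by linarith), Real.rpow_neg (le_of_lt hx)]
  exact inv_anti₀ (Real.rpow_pos_of_pos hx _)
    (Real.rpow_le_rpow (le_of_lt hx) hxy (by linarith))
set_option maxHeartbeats 1000000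
theorem patching_dyadic_asymptotics (d : ℕ) (hd : 1 ≤ d) (a C : ℝ)
    (ha : 0 ≤ a) (hC : 0 ≤ C) (ρ₀ : ℝ) (hρ₀ : 2 ≤ ρ₀)
    (M : ℕ) (hM : 0 < M) (hMa : 12 * (a + 1) ≤ (M : ℝ))
    (f : ℝ → ℝ) (c : ℝ)
    (h : ∀ n : ℕ, ∃ e : ℤ → ℕ → ℝ,
      (∀ j ∈ Finset.Icc (-(d : ℤ) + 1) (6 * (M : ℤ)), ∀ p ∈ Finset.range d,
        |e j p| ≤ C * ((2 : ℝ) ^ n * ρ₀) ^ (2 * (j : ℝ) / 3 + a)) ∧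
      (∀ ρ ∈ Set.Icc ((2 : ℝ) ^ n * ρ₀) (4 * ((2 : ℝ) ^ n * ρ₀)),
        |f ρ - c * ρ ^ d -
            ∑ p ∈ Finset.range d, ∑ j ∈ Finset.Icc (-(d : ℤ) + 1) (6 * (M : ℤ)),
              e j p * ρ ^ (-j) * Real.log ρ ^ p| ≤
          C * ((2 : ℝ) ^ n * ρ₀) ^ (-(M : ℝ)))) :
    ∃ (e : ℤ → ℕ → ℝ) (C' : ℝ), 0 ≤ C' ∧
      ∀ ρ : ℝ, ρ₀ ≤ ρ →
        |f ρ - c * ρ ^ d -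
            ∑ p ∈ Finset.range d, ∑ j ∈ Finset.Icc (-(d : ℤ) + 1) ((M / 6 : ℕ) : ℤ),
              e j p * ρ ^ (-j) * Real.log ρ ^ p| ≤
          C' * ρ ^ (-(M : ℝ) / 6) := by
  classical
  have hρ₀0 : (0:ℝ) < ρ₀ := by linarith
  have hρ₀1 : (1:ℝ) ≤ ρ₀ := by linarith
  set R : ℕ → ℝ := fun n => (2:ℝ)^n * ρ₀ with hRdef
  have hRge : ∀ n, (2:ℝ) ≤ R n := by
    intro n
    have h1 : (1:ℝ) ≤ 2^n := one_le_pow₀ one_le_two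
    calc (2:ℝ) ≤ ρ₀ := hρ₀
    _ = 1 * ρ₀ := (one_mul _).symm
    _ ≤ 2^n * ρ₀ := mul_le_mul_of_nonneg_right h1 (le_of_lt hρ₀0)
  have hR0 : ∀ n, (0:ℝ) < R n := fun n => by positivity
  have hR1 : ∀ n, (1:ℝ) ≤ R n := fun n => by linarith [hRge n]
  have hRsucc : ∀ n, R (n+1) = 2 * R n := by
    intro n
    show (2:ℝ)^(n+1) * ρ₀ = 2 * ((2:ℝ)^n * ρ₀)
    rw [pow_succ]
    ring
  choose en hen using h
  have hen1 : ∀ n, ∀ j ∈ Finset.Icc (-(d : ℤ) + 1) (6 * (M : ℤ)), ∀ p ∈ Finset.range d,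
      |en n j p| ≤ C * (R n) ^ (2 * (j : ℝ) / 3 + a) := fun n => (hen n).1
  have hen2 : ∀ n, ∀ ρ ∈ Set.Icc (R n) (4 * R n),
      |f ρ - c * ρ ^ d - ∑ p ∈ Finset.range d, ∑ j ∈ Finset.Icc (-(d : ℤ) + 1) (6 * (M : ℤ)),
        en n j p * ρ ^ (-j) * Real.log ρ ^ p| ≤ C * (R n) ^ (-(M : ℝ)) := fun n => (hen n).2
  set JS : Finset ℤ := Finset.Icc (-(d : ℤ) + 1) (6 * (M : ℤ)) with hJSdef
  set m : ℕ := M / 6 with hmdef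
  have hm6 : 6 * m ≥ M - 5 ∧ m ≤ M := by constructor <;> omega
  obtain ⟨K, hK0, hKb⟩ := expPoly_inverse_bound (JS ×ˢ Finset.range d)
  obtain ⟨cl, hcl0, hcl⟩ := logpow_absorb (d*d)
  obtain ⟨cl2, hcl20, hcl2⟩ := logpow_absorb d
  -- coefficient difference bound
  set CD2 : ℝ := (2^(6*M) * 2 * (1+(d:ℝ)*2^d)^d * cl * K) * (2*C) with hCD2def
  have hCD2 : 0 ≤ CD2 := by
    rw [hCD2def]
    apply mul_nonneg _ (by linarith)
    apply mul_nonneg (mul_nonneg (by positivity) hcl0) hK0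
  have hdiff : ∀ n, ∀ j ∈ JS, ∀ p ∈ Finset.range d,
      |en n j p - en (n+1) j p| ≤ CD2 * (R n) ^ ((j:ℝ) - (M:ℝ) + 1/12) := by
    intro n j hj p hp
    have hBpos : (0:ℝ) ≤ 2*C*(R n)^(-(M:ℝ)) := by positivity
    have happrox : ∀ ρ ∈ Set.Icc (2*(R n)) (4*(R n)),
        |∑ p ∈ Finset.range d, ∑ j ∈ Finset.Icc (-(d:ℤ)+1) (6*(M:ℤ)),
          (en n j p - en (n+1) j p) * ρ ^ (-j) * Real.log ρ ^ p| ≤ 2*C*(R n)^(-(M:ℝ)) := by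
      intro ρ hρ
      have hρ1mem : ρ ∈ Set.Icc (R n) (4 * R n) :=
        ⟨le_trans (by linarith [hR0 n]) hρ.1, hρ.2⟩
      have hρ2mem : ρ ∈ Set.Icc (R (n+1)) (4 * R (n+1)) := by
        rw [hRsucc n]
        exact ⟨hρ.1, by nlinarith [hρ.2, hR0 n]⟩
      have h1 := hen2 n ρ hρ1mem
      have h2 := hen2 (n+1) ρ hρ2mem
      have hsplit : ∑ p ∈ Finset.range d, ∑ j ∈ Finset.Icc (-(d:ℤ)+1) (6*(M:ℤ)),
          (en n j p - en (n+1) j p) * ρ ^ (-j) * Real.log ρ ^ p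
          = (f ρ - c * ρ ^ d - ∑ p ∈ Finset.range d, ∑ j ∈ Finset.Icc (-(d:ℤ)+1) (6*(M:ℤ)),
              en (n+1) j p * ρ ^ (-j) * Real.log ρ ^ p)
          - (f ρ - c * ρ ^ d - ∑ p ∈ Finset.range d, ∑ j ∈ Finset.Icc (-(d:ℤ)+1) (6*(M:ℤ)),
              en n j p * ρ ^ (-j) * Real.log ρ ^ p) := by
        rw [sub_sub_sub_cancel_left, ← Finset.sum_sub_distrib]
        apply Finset.sum_congr rfl
        intro p _
        rw [← Finset.sum_sub_distrib]
        apply Finset.sum_congr rfl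
        intro j _
        ring
      rw [hsplit]
      have hRMle : (R (n+1)) ^ (-(M:ℝ)) ≤ (R n) ^ (-(M:ℝ)) :=
        rpow_anti_base (hR0 n) (by rw [hRsucc n]; linarith [hR0 n])
          (neg_nonpos.mpr (by positivity))
      calc |_ - _| ≤ |f ρ - c * ρ ^ d - ∑ p ∈ Finset.range d, ∑ j ∈ Finset.Icc (-(d:ℤ)+1) (6*(M:ℤ)),
              en (n+1) j p * ρ ^ (-j) * Real.log ρ ^ p|
            + |f ρ - c * ρ ^ d - ∑ p ∈ Finset.range d, ∑ j ∈ Finset.Icc (-(d:ℤ)+1) (6*(M:ℤ)),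
              en n j p * ρ ^ (-j) * Real.log ρ ^ p| := abs_sub _ _
      _ ≤ C * (R (n+1)) ^ (-(M:ℝ)) + C * (R n) ^ (-(M:ℝ)) := add_le_add h2 h1
      _ ≤ 2*C*(R n)^(-(M:ℝ)) := by nlinarith [mul_le_mul_of_nonneg_left hRMle hC]
    have := aux_coeff_bound d M hd K hK0 hKb cl hcl0 hcl (R n) (2*C*(R n)^(-(M:ℝ)))
      (hRge n) hBpos (fun j p => en n j p - en (n+1) j p) happrox j hj p hp
    calc |en n j p - en (n+1) j p|
        ≤ (2^(6*M) * 2 * (1+(d:ℝ)*2^d)^d * cl * K * (2*C*(R n)^(-(M:ℝ))))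
          * (R n) ^ ((j:ℝ) + 1/12) := this
    _ = CD2 * ((R n)^(-(M:ℝ)) * (R n) ^ ((j:ℝ) + 1/12)) := by rw [hCD2def]; ring
    _ = CD2 * (R n) ^ ((j:ℝ) - (M:ℝ) + 1/12) := by
        rw [← Real.rpow_add (hR0 n)]
        congr 1
        ring
  -- geometric limits
  set r₀ : ℝ := (2:ℝ) ^ (-(11:ℝ)/12) with hr₀def
  have hr₀1 : r₀ < 1 := Real.rpow_lt_one_of_one_lt_of_neg one_lt_two (by norm_num)
  have hr₀0 : (0:ℝ) < r₀ := Real.rpow_pos_of_pos two_pos _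
  set κ : ℝ := (1 - r₀)⁻¹ with hκdef
  have hκ0 : 0 ≤ κ := by rw [hκdef]; exact inv_nonneg.mpr (by linarith)
  have hRpow : ∀ (x : ℝ) (n : ℕ), (R n) ^ x = ((2:ℝ)^x)^n * ρ₀ ^ x := by
    intro x n
    show ((2:ℝ)^n * ρ₀) ^ x = _
    rw [Real.mul_rpow (by positivity) (le_of_lt hρ₀0)]
    congr 1
    rw [← Real.rpow_natCast (2:ℝ) n, ← Real.rpow_mul (by norm_num), mul_comm,
      Real.rpow_mul (by norm_num), Real.rpow_natCast]
  set κ2 : ℝ := κ * CD2 with hκ2def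
  have hκ2 : 0 ≤ κ2 := mul_nonneg hκ0 hCD2
  have hlim : ∀ (j : ℤ) (p : ℕ), ∃ E : ℝ,
      ((j ∈ JS ∧ j ≤ (M:ℤ) - 1 ∧ p < d) →
        ∀ n, |en n j p - E| ≤ κ2 * (R n) ^ ((j:ℝ) - (M:ℝ) + 1/12)) ∧
      (¬(j ∈ JS ∧ j ≤ (M:ℤ) - 1 ∧ p < d) → E = 0) := by
    intro j p
    by_cases hc : j ∈ JS ∧ j ≤ (M:ℤ) - 1 ∧ p < d
    · obtain ⟨hjJS, hjM, hpd⟩ := hc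
      set ε : ℝ := (j:ℝ) - (M:ℝ) + 1/12 with hεdef
      have hjM' : (j:ℝ) ≤ (M:ℝ) - 1 := by
        have : ((j:ℝ)) ≤ (((M:ℤ) - 1 : ℤ) : ℝ) := by exact_mod_cast hjM
        push_cast at this
        linarith
      have hε : ε ≤ -(11:ℝ)/12 := by rw [hεdef]; linarith
      set r : ℝ := (2:ℝ) ^ ε with hrdef
      have hrr₀ : r ≤ r₀ := Real.rpow_le_rpow_of_exponent_le one_le_two (by linarith)
      have hr1 : r < 1 := lt_of_le_of_lt hrr₀ hr₀1
      have hr0' : (0:ℝ) < r := Real.rpow_pos_of_pos two_pos _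
      have hgeom : ∀ n, dist (en n j p) (en (n+1) j p) ≤ (CD2 * ρ₀ ^ ε) * r ^ n := by
        intro n
        rw [Real.dist_eq]
        calc |en n j p - en (n+1) j p| ≤ CD2 * (R n) ^ ε :=
            hdiff n j hjJS p (Finset.mem_range.mpr hpd)
        _ = (CD2 * ρ₀ ^ ε) * r ^ n := by rw [hRpow ε n, hrdef]; ring
      have hcauchy := cauchySeq_of_le_geometric r (CD2 * ρ₀ ^ ε) hr1 hgeom
      obtain ⟨E, hE⟩ := cauchySeq_tendsto_of_complete hcauchy
      refine ⟨E, fun _ n => ?_, fun hn => absurd ⟨hjJS, hjM, hpd⟩ hn⟩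
      have hdist := dist_le_of_le_geometric_of_tendsto r (CD2 * ρ₀ ^ ε) hr1 hgeom hE n
      rw [Real.dist_eq] at hdist
      have hX0 : 0 ≤ (CD2 * ρ₀ ^ ε) * r ^ n :=
        mul_nonneg (mul_nonneg hCD2 (Real.rpow_nonneg (le_of_lt hρ₀0) _))
          (pow_nonneg (le_of_lt hr0') n)
      have hinv : (1 - r)⁻¹ ≤ κ := by
        rw [hκdef]
        exact inv_anti₀ (by linarith) (by linarith)
      calc |en n j p - E| ≤ (CD2 * ρ₀ ^ ε) * r ^ n / (1 - r) := hdist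
      _ = (CD2 * ρ₀ ^ ε) * r ^ n * (1 - r)⁻¹ := div_eq_mul_inv _ _
      _ ≤ (CD2 * ρ₀ ^ ε) * r ^ n * κ := mul_le_mul_of_nonneg_left hinv hX0
      _ = κ2 * ((2^ε)^n * ρ₀^ε) := by rw [hκ2def, hrdef]; ring
      _ = κ2 * (R n) ^ ε := by rw [hRpow ε n]
    · exact ⟨0, fun hx => absurd hx hc, fun _ => rfl⟩
  choose e he1 he2 using hlim
  -- uniform bound on the limit coefficients
  set EB : ℝ := C * ρ₀ ^ (4*(M:ℝ) + a) + κ2 with hEBdef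
  have hEB0 : 0 ≤ EB := by
    rw [hEBdef]
    exact add_nonneg (mul_nonneg hC (Real.rpow_nonneg (le_of_lt hρ₀0) _)) hκ2
  have hEB : ∀ j ∈ JS, ∀ p ∈ Finset.range d, j ≤ (M:ℤ) - 1 → |e j p| ≤ EB := by
    intro j hj p hp hjM
    have hcond : j ∈ JS ∧ j ≤ (M:ℤ)-1 ∧ p < d := ⟨hj, hjM, Finset.mem_range.mp hp⟩
    have h1 := he1 j p hcond 0
    have hR0eq : R 0 = ρ₀ := by show (2:ℝ)^(0:ℕ) * ρ₀ = ρ₀; simp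
    have h2 := hen1 0 j hj p hp
    rw [hR0eq] at h1 h2
    have hj6 : (j:ℝ) ≤ 6*(M:ℝ) := by
      have := (Finset.mem_Icc.mp hj).2
      have h' : ((j:ℝ)) ≤ ((6 * (M:ℤ) : ℤ) : ℝ) := by exact_mod_cast this
      push_cast at h'
      linarith
    have hjM' : (j:ℝ) ≤ (M:ℝ) - 1 := by
      have : ((j:ℝ)) ≤ (((M:ℤ) - 1 : ℤ) : ℝ) := by exact_mod_cast hjM
      push_cast at this
      linarith
    have h3 : ρ₀ ^ (2*(j:ℝ)/3 + a) ≤ ρ₀ ^ (4*(M:ℝ) + a) :=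
      Real.rpow_le_rpow_of_exponent_le hρ₀1 (by linarith)
    have h4 : ρ₀ ^ ((j:ℝ) - (M:ℝ) + 1/12) ≤ 1 :=
      Real.rpow_le_one_of_one_le_of_nonpos hρ₀1 (by linarith)
    calc |e j p| = |en 0 j p - (en 0 j p - e j p)| := by ring_nf
    _ ≤ |en 0 j p| + |en 0 j p - e j p| := abs_sub _ _
    _ ≤ C * ρ₀ ^ (4*(M:ℝ)+a) + κ2 * 1 :=
        add_le_add (h2.trans (mul_le_mul_of_nonneg_left h3 hC))
          (h1.trans (mul_le_mul_of_nonneg_left h4 hκ2))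
    _ = EB := by rw [hEBdef]; ring
  -- log absorption for powers p < d
  have hlogp : ∀ x : ℝ, 2 ≤ x → ∀ p : ℕ, p < d →
      (Real.log x) ^ p ≤ 3^d * (cl2 * x ^ ((1:ℝ)/12)) := by
    intro x hx p hpd
    have hx1 : (1:ℝ) ≤ x := by linarith
    have hu0 : 0 ≤ Real.log x := Real.log_nonneg hx1
    have hu23 : (2:ℝ)/3 ≤ Real.log x := by
      have h1 : Real.log 2 ≤ Real.log x := Real.log_le_log (by norm_num) hx
      nlinarith [Real.log_two_gt_d9]
    have hprep : (Real.log x) ^ p ≤ 3^d * (Real.log x) ^ d := by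
      have h3d : (1:ℝ) ≤ 3^d := one_le_pow₀ (by norm_num)
      rcases le_or_gt 1 (Real.log x) with h1 | h1
      · calc (Real.log x)^p ≤ (Real.log x)^d := pow_le_pow_right₀ h1 (by omega)
        _ ≤ 3^d * (Real.log x)^d := le_mul_of_one_le_left (pow_nonneg hu0 d) h3d
      · have h2 : (Real.log x)^p ≤ 1 := pow_le_one₀ hu0 (le_of_lt h1)
        have h3 : (1:ℝ) ≤ 3^d * (Real.log x)^d := by
          have h4 : (1:ℝ) ≤ (3 * Real.log x) ^ d := one_le_pow₀ (by linarith)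
          rw [mul_pow] at h4
          linarith
        linarith
    calc (Real.log x)^p ≤ 3^d * (Real.log x)^d := hprep
    _ ≤ 3^d * (cl2 * x ^ ((1:ℝ)/12)) :=
        mul_le_mul_of_nonneg_left (hcl2 x hx) (by positivity)
  -- final constant
  set JT : Finset ℤ := Finset.Icc ((m:ℤ)+1) (6*(M:ℤ)) with hJTdef
  set Λ : ℝ := (κ2 + C + EB) * (2^(d+1) * 3^d * cl2 * 2^M) with hΛdef
  have hΛ0 : 0 ≤ Λ := by
    rw [hΛdef]
    exact mul_nonneg (by linarith) (by positivity)
  set C' : ℝ := C * 2^M + ((d:ℝ) * (JS.card:ℝ) + (d:ℝ) * (JT.card:ℝ)) * Λ with hC'def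
  refine ⟨e, C', ?_, ?_⟩
  · rw [hC'def]
    apply add_nonneg (by positivity)
    exact mul_nonneg (by positivity) hΛ0
  intro ρ hρ
  -- locate ρ dyadically
  obtain ⟨n, hn1, hn2⟩ : ∃ n : ℕ, R n ≤ ρ ∧ ρ ≤ 2 * R n := by
    have hρpos : (0:ℝ) < ρ := by linarith
    have hx0 : (0:ℝ) < ρ / ρ₀ := by positivity
    obtain ⟨k, hk⟩ := exists_mem_Ico_zpow hx0 (one_lt_two : (1:ℝ) < 2)
    have hx1 : (1:ℝ) ≤ ρ / ρ₀ := (one_le_div hρ₀0).mpr hρ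
    have hk0 : 0 ≤ k := by
      by_contra hneg
      push_neg at hneg
      have hk1 : k + 1 ≤ 0 := by omega
      have h1 : (2:ℝ)^(k+1) ≤ (2:ℝ)^(0:ℤ) := zpow_le_zpow_right₀ one_le_two hk1
      rw [zpow_zero] at h1
      have := hk.2
      linarith
    have hcast : ((2:ℝ)^(k.toNat : ℕ) : ℝ) = (2:ℝ)^k := by
      rw [← zpow_natCast]
      congr 1
      omega
    refine ⟨k.toNat, ?_, ?_⟩
    · show (2:ℝ)^(k.toNat) * ρ₀ ≤ ρ
      rw [hcast]
      calc (2:ℝ)^k * ρ₀ ≤ (ρ/ρ₀) * ρ₀ := mul_le_mul_of_nonneg_right hk.1 (le_of_lt hρ₀0)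
      _ = ρ := div_mul_cancel₀ ρ (ne_of_gt hρ₀0)
    · show ρ ≤ 2 * ((2:ℝ)^(k.toNat) * ρ₀)
      rw [hcast]
      have h3 : (2:ℝ)^(k+1) = 2 * (2:ℝ)^k := by
        rw [zpow_add₀ (by norm_num : (2:ℝ) ≠ 0)]
        ring
      have h4 : ρ/ρ₀ ≤ 2*(2:ℝ)^k := by rw [← h3]; exact le_of_lt hk.2
      calc ρ = (ρ/ρ₀)*ρ₀ := (div_mul_cancel₀ ρ (ne_of_gt hρ₀0)).symm
      _ ≤ 2*(2:ℝ)^k*ρ₀ := mul_le_mul_of_nonneg_right h4 (le_of_lt hρ₀0)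
      _ = 2*((2:ℝ)^k*ρ₀) := by ring
  have hρ2 : (2:ℝ) ≤ ρ := le_trans hρ₀ hρ
  have hρ1 : (1:ℝ) ≤ ρ := by linarith
  have hρ0 : (0:ℝ) < ρ := by linarith
  have hρmem : ρ ∈ Set.Icc (R n) (4 * R n) := ⟨hn1, by nlinarith [hR0 n]⟩
  have hM1 : (1:ℝ) ≤ (M:ℝ) := by exact_mod_cast hM
  -- rpow conversion facts
  have hRn6 : (R n) ^ (-(M:ℝ)/6) ≤ 2^M * ρ ^ (-(M:ℝ)/6) := by
    have hMnn : (0:ℝ) ≤ (M:ℝ) := Nat.cast_nonneg M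
    have h1 : (R n) ^ (-(M:ℝ)/6) ≤ (ρ/2) ^ (-(M:ℝ)/6) :=
      rpow_anti_base (by positivity) (by linarith) (by linarith)
    have h2 : (ρ/2) ^ (-(M:ℝ)/6) = ρ ^ (-(M:ℝ)/6) * (2:ℝ) ^ ((M:ℝ)/6) := by
      rw [Real.div_rpow (le_of_lt hρ0) (by norm_num : (0:ℝ) ≤ 2), div_eq_mul_inv,
        ← Real.rpow_neg (by norm_num : (0:ℝ) ≤ 2)]
      congr 1
      ring
    have h3 : (2:ℝ) ^ ((M:ℝ)/6) ≤ 2^M := by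
      calc (2:ℝ) ^ ((M:ℝ)/6) ≤ (2:ℝ) ^ ((M:ℕ):ℝ) :=
          Real.rpow_le_rpow_of_exponent_le one_le_two (by linarith)
      _ = 2^M := Real.rpow_natCast 2 M
    calc (R n)^(-(M:ℝ)/6) ≤ (ρ/2)^(-(M:ℝ)/6) := h1
    _ = ρ ^ (-(M:ℝ)/6) * (2:ℝ)^((M:ℝ)/6) := h2
    _ ≤ ρ ^ (-(M:ℝ)/6) * 2^M :=
        mul_le_mul_of_nonneg_left h3 (Real.rpow_nonneg (le_of_lt hρ0) _)
    _ = 2^M * ρ^(-(M:ℝ)/6) := mul_comm _ _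
  have hzr : ∀ j : ℤ, (ρ:ℝ) ^ (-j) = ρ ^ (-(j:ℝ)) := by
    intro j
    rw [← Real.rpow_intCast ρ (-j)]
    congr 1
    push_cast
    ring
  have hzρ : ∀ j : ℤ, -(d:ℤ)+1 ≤ j → ρ ^ (-(j:ℝ)) ≤ 2^d * (R n) ^ (-(j:ℝ)) := by
    intro j hj
    have hjd : -(j:ℝ) ≤ (d:ℝ) := by
      have h' : ((-(d:ℤ)+1 : ℤ):ℝ) ≤ (j:ℝ) := by exact_mod_cast hj
      push_cast at h'
      linarith
    have h2d : (1:ℝ) ≤ 2^d := one_le_pow₀ one_le_two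
    rcases le_or_gt 0 (-(j:ℝ)) with h0 | h0
    · calc ρ ^ (-(j:ℝ)) ≤ (2 * R n) ^ (-(j:ℝ)) :=
          Real.rpow_le_rpow (le_of_lt hρ0) hn2 h0
      _ = (2:ℝ)^(-(j:ℝ)) * (R n)^(-(j:ℝ)) :=
          Real.mul_rpow (by norm_num) (le_of_lt (hR0 n))
      _ ≤ 2^d * (R n)^(-(j:ℝ)) := by
          apply mul_le_mul_of_nonneg_right _ (Real.rpow_nonneg (le_of_lt (hR0 n)) _)
          calc (2:ℝ)^(-(j:ℝ)) ≤ (2:ℝ)^((d:ℕ):ℝ) :=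
              Real.rpow_le_rpow_of_exponent_le one_le_two hjd
          _ = 2^d := Real.rpow_natCast 2 d
    · calc ρ ^ (-(j:ℝ)) ≤ (R n) ^ (-(j:ℝ)) := rpow_anti_base (hR0 n) hn1 (le_of_lt h0)
      _ ≤ 2^d * (R n)^(-(j:ℝ)) :=
          le_mul_of_one_le_left (Real.rpow_nonneg (le_of_lt (hR0 n)) _) h2d
  -- master per-term estimate
  have hterm : ∀ (j : ℤ), j ∈ JS → ∀ (p : ℕ), p < d → ∀ (coef Q w : ℝ), 0 ≤ Q →
      |coef| ≤ Q * (R n) ^ w → w - (j:ℝ) + 1/12 ≤ -(M:ℝ)/6 →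
      |coef * ρ ^ (-j) * Real.log ρ ^ p|
        ≤ (Q * (2^(d+1) * 3^d * cl2 * 2^M)) * ρ ^ (-(M:ℝ)/6) := by
    intro j hj p hpd coef Q w hQ hcoef hw
    have hjlo : -(d:ℤ)+1 ≤ j := (Finset.mem_Icc.mp hj).1
    have hlρ : 0 ≤ Real.log ρ := Real.log_nonneg hρ1
    have hzpos : (0:ℝ) < ρ ^ (-j) := zpow_pos hρ0 _
    have e1 : |coef * ρ ^ (-j) * Real.log ρ ^ p| = |coef| * ρ ^ (-(j:ℝ)) * Real.log ρ ^ p := by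
      rw [abs_mul, abs_mul, abs_of_pos hzpos, abs_of_nonneg (pow_nonneg hlρ p), hzr j]
    rw [e1]
    have hQRw : 0 ≤ Q * (R n)^w := mul_nonneg hQ (Real.rpow_nonneg (le_of_lt (hR0 n)) _)
    have step1 : |coef| * ρ ^ (-(j:ℝ)) * Real.log ρ ^ p
        ≤ (Q * (R n)^w) * (2^d * (R n)^(-(j:ℝ))) * (3^d * (cl2 * ρ^((1:ℝ)/12))) := by
      apply mul_le_mul _ (hlogp ρ hρ2 p hpd) (pow_nonneg hlρ p) _
      · exact mul_le_mul hcoef (hzρ j hjlo) (Real.rpow_nonneg (le_of_lt hρ0) _) hQRw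
      · exact mul_nonneg hQRw
          (mul_nonneg (by positivity) (Real.rpow_nonneg (le_of_lt (hR0 n)) _))
    have hρ112 : ρ ^ ((1:ℝ)/12) ≤ 2 * (R n) ^ ((1:ℝ)/12) := by
      calc ρ ^ ((1:ℝ)/12) ≤ (2 * R n) ^ ((1:ℝ)/12) :=
          Real.rpow_le_rpow (le_of_lt hρ0) hn2 (by norm_num)
      _ = (2:ℝ)^((1:ℝ)/12) * (R n)^((1:ℝ)/12) := Real.mul_rpow (by norm_num) (le_of_lt (hR0 n))
      _ ≤ 2 * (R n)^((1:ℝ)/12) := by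
          apply mul_le_mul_of_nonneg_right _ (Real.rpow_nonneg (le_of_lt (hR0 n)) _)
          calc (2:ℝ)^((1:ℝ)/12) ≤ (2:ℝ)^(1:ℝ) :=
              Real.rpow_le_rpow_of_exponent_le one_le_two (by norm_num)
          _ = 2 := Real.rpow_one 2
    have step2 : (Q * (R n)^w) * (2^d * (R n)^(-(j:ℝ))) * (3^d * (cl2 * ρ^((1:ℝ)/12)))
        ≤ (Q * (2^(d+1) * 3^d * cl2)) * ((R n)^w * (R n)^(-(j:ℝ)) * (R n)^((1:ℝ)/12)) := by
      have hnn : (0:ℝ) ≤ (Q * 2^d * 3^d * cl2) * ((R n)^w * (R n)^(-(j:ℝ))) := by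
        apply mul_nonneg
        · exact mul_nonneg (mul_nonneg (mul_nonneg hQ (by positivity)) (by positivity)) hcl20
        · exact mul_nonneg (Real.rpow_nonneg (le_of_lt (hR0 n)) _)
            (Real.rpow_nonneg (le_of_lt (hR0 n)) _)
      calc (Q * (R n)^w) * (2^d * (R n)^(-(j:ℝ))) * (3^d * (cl2 * ρ^((1:ℝ)/12)))
          = (Q * 2^d * 3^d * cl2) * ((R n)^w * (R n)^(-(j:ℝ))) * ρ^((1:ℝ)/12) := by ring
      _ ≤ (Q * 2^d * 3^d * cl2) * ((R n)^w * (R n)^(-(j:ℝ))) * (2 * (R n)^((1:ℝ)/12)) :=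
          mul_le_mul_of_nonneg_left hρ112 hnn
      _ = (Q * (2^(d+1) * 3^d * cl2)) * ((R n)^w * (R n)^(-(j:ℝ)) * (R n)^((1:ℝ)/12)) := by
          rw [pow_succ]
          ring
    have step3 : (R n)^w * (R n)^(-(j:ℝ)) * (R n)^((1:ℝ)/12) = (R n)^(w - (j:ℝ) + 1/12) := by
      rw [← Real.rpow_add (hR0 n), ← Real.rpow_add (hR0 n), sub_eq_add_neg]
    have step4 : (R n)^(w - (j:ℝ) + 1/12) ≤ (R n)^(-(M:ℝ)/6) :=
      Real.rpow_le_rpow_of_exponent_le (hR1 n) hw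
    have hQc : (0:ℝ) ≤ Q * (2^(d+1) * 3^d * cl2) := mul_nonneg hQ (by positivity)
    calc |coef| * ρ ^ (-(j:ℝ)) * Real.log ρ ^ p
        ≤ (Q * (R n)^w) * (2^d * (R n)^(-(j:ℝ))) * (3^d * (cl2 * ρ^((1:ℝ)/12))) := step1
    _ ≤ (Q * (2^(d+1) * 3^d * cl2)) * ((R n)^w * (R n)^(-(j:ℝ)) * (R n)^((1:ℝ)/12)) := step2
    _ = (Q * (2^(d+1) * 3^d * cl2)) * (R n)^(w - (j:ℝ) + 1/12) := by rw [step3]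
    _ ≤ (Q * (2^(d+1) * 3^d * cl2)) * (R n)^(-(M:ℝ)/6) :=
        mul_le_mul_of_nonneg_left step4 hQc
    _ ≤ (Q * (2^(d+1) * 3^d * cl2)) * (2^M * ρ^(-(M:ℝ)/6)) :=
        mul_le_mul_of_nonneg_left hRn6 hQc
    _ = (Q * (2^(d+1) * 3^d * cl2 * 2^M)) * ρ^(-(M:ℝ)/6) := by ring
  -- per-term bounds for the middle sum
  have hX2t : ∀ p ∈ Finset.range d, ∀ j ∈ JS,
      |(en n j p - e j p) * ρ^(-j) * Real.log ρ^p| ≤ Λ * ρ^(-(M:ℝ)/6) := by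
    intro p hp j hj
    have hpd := Finset.mem_range.mp hp
    have hQnn : (0:ℝ) ≤ κ2 + C + EB := by linarith
    rcases le_or_gt j ((M:ℤ)-1) with hcase | hcase
    · have hb := he1 j p ⟨hj, hcase, hpd⟩ n
      have hb' : |en n j p - e j p| ≤ (κ2 + C + EB) * (R n)^((j:ℝ)-(M:ℝ)+1/12) :=
        hb.trans (mul_le_mul_of_nonneg_right (by linarith)
          (Real.rpow_nonneg (le_of_lt (hR0 n)) _))
      exact hterm j hj p hpd _ _ _ hQnn hb' (by linarith)
    · have hjM : (M:ℝ) ≤ (j:ℝ) := by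
        have h' : (M:ℤ) ≤ j := by omega
        exact_mod_cast h'
      have he0 : e j p = 0 := he2 j p (by rintro ⟨_, h', _⟩; omega)
      have hb := hen1 n j hj p hp
      have hb' : |en n j p - e j p| ≤ (κ2 + C + EB) * (R n)^(2*(j:ℝ)/3 + a) := by
        rw [he0, sub_zero]
        exact hb.trans (mul_le_mul_of_nonneg_right (by linarith)
          (Real.rpow_nonneg (le_of_lt (hR0 n)) _))
      exact hterm j hj p hpd _ _ _ hQnn hb' (by linarith)
  -- per-term bounds for the tail sum
  have hX3t : ∀ p ∈ Finset.range d, ∀ j ∈ JT,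
      |e j p * ρ^(-j) * Real.log ρ^p| ≤ Λ * ρ^(-(M:ℝ)/6) := by
    intro p hp j hj
    have hpd := Finset.mem_range.mp hp
    have hQnn : (0:ℝ) ≤ κ2 + C + EB := by linarith
    have hjT : (m:ℤ)+1 ≤ j ∧ j ≤ 6*(M:ℤ) := Finset.mem_Icc.mp hj
    have hjJS : j ∈ JS := by
      rw [hJSdef]
      apply Finset.mem_Icc.mpr
      constructor
      · omega
      · exact hjT.2
    rcases le_or_gt j ((M:ℤ)-1) with hcase | hcase
    · have hbE := hEB j hjJS p hp hcase
      have hb' : |e j p| ≤ (κ2 + C + EB) * (R n)^(0:ℝ) := by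
        rw [Real.rpow_zero, mul_one]
        linarith
      apply hterm j hjJS p hpd _ _ _ hQnn hb' ?_
      have hm65 : M ≤ 6*m + 5 := by omega
      have hm65' : (M:ℝ) ≤ 6*(m:ℝ) + 5 := by exact_mod_cast hm65
      have hjm : (m:ℝ) + 1 ≤ (j:ℝ) := by
        have h' : ((m:ℤ)+1 : ℤ) ≤ j := hjT.1
        have h'' : (((m:ℤ)+1 : ℤ):ℝ) ≤ (j:ℝ) := by exact_mod_cast h'
        push_cast at h''
        linarith
      linarith
    · have he0 : e j p = 0 := he2 j p (by rintro ⟨_, h', _⟩; omega)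
      rw [he0]
      simp only [zero_mul, abs_zero]
      exact mul_nonneg hΛ0 (Real.rpow_nonneg (le_of_lt hρ0) _)
  -- summation
  have hsumbound : ∀ (F : Finset ℤ) (g : ℤ → ℕ → ℝ),
      (∀ p ∈ Finset.range d, ∀ j ∈ F, |g j p * ρ^(-j) * Real.log ρ^p| ≤ Λ * ρ^(-(M:ℝ)/6)) →
      |∑ p ∈ Finset.range d, ∑ j ∈ F, g j p * ρ^(-j) * Real.log ρ^p|
        ≤ ((d:ℝ) * (F.card:ℝ) * Λ) * ρ^(-(M:ℝ)/6) := by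
    intro F g hg
    calc |∑ p ∈ Finset.range d, ∑ j ∈ F, g j p * ρ^(-j) * Real.log ρ^p|
        ≤ ∑ p ∈ Finset.range d, |∑ j ∈ F, g j p * ρ^(-j) * Real.log ρ^p| :=
          Finset.abs_sum_le_sum_abs _ _
    _ ≤ ∑ _p ∈ Finset.range d, ((F.card:ℝ) * (Λ * ρ^(-(M:ℝ)/6))) := by
        apply Finset.sum_le_sum
        intro p hp
        calc |∑ j ∈ F, g j p * ρ^(-j) * Real.log ρ^p|
            ≤ ∑ j ∈ F, |g j p * ρ^(-j) * Real.log ρ^p| := Finset.abs_sum_le_sum_abs _ _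
        _ ≤ ∑ _j ∈ F, Λ * ρ^(-(M:ℝ)/6) :=
            Finset.sum_le_sum (fun j hj => hg p hp j hj)
        _ = (F.card:ℝ) * (Λ * ρ^(-(M:ℝ)/6)) := by rw [Finset.sum_const, nsmul_eq_mul]
    _ = (d:ℝ) * ((F.card:ℝ) * (Λ * ρ^(-(M:ℝ)/6))) := by
        rw [Finset.sum_const, nsmul_eq_mul, Finset.card_range]
    _ = ((d:ℝ) * (F.card:ℝ) * Λ) * ρ^(-(M:ℝ)/6) := by ring
  have hX1 : |f ρ - c * ρ^d - ∑ p ∈ Finset.range d, ∑ j ∈ JS,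
      en n j p * ρ^(-j) * Real.log ρ^p| ≤ (C * 2^M) * ρ^(-(M:ℝ)/6) := by
    have hMnn : (0:ℝ) ≤ (M:ℝ) := Nat.cast_nonneg M
    calc |f ρ - c * ρ^d - ∑ p ∈ Finset.range d, ∑ j ∈ JS,
        en n j p * ρ^(-j) * Real.log ρ^p| ≤ C * (R n)^(-(M:ℝ)) := hen2 n ρ hρmem
    _ ≤ C * (R n)^(-(M:ℝ)/6) := mul_le_mul_of_nonneg_left
        (Real.rpow_le_rpow_of_exponent_le (hR1 n) (by linarith)) hC
    _ ≤ C * (2^M * ρ^(-(M:ℝ)/6)) := mul_le_mul_of_nonneg_left hRn6 hC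
    _ = (C * 2^M) * ρ^(-(M:ℝ)/6) := by ring
  have hX2 := hsumbound JS (fun j p => en n j p - e j p) hX2t
  have hX3 := hsumbound JT e hX3t
  -- splitting of the index set
  have hunion : Finset.Icc (-(d:ℤ)+1) ((m:ℕ):ℤ) ∪ JT = JS := by
    rw [hJTdef, hJSdef]
    ext x
    simp only [Finset.mem_union, Finset.mem_Icc]
    omega
  have hdisj : Disjoint (Finset.Icc (-(d:ℤ)+1) ((m:ℕ):ℤ)) JT := by
    rw [hJTdef, Finset.disjoint_left]
    intro x hx hx'
    simp only [Finset.mem_Icc] at hx hx'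
    omega
  have hdecomp : f ρ - c * ρ^d - ∑ p ∈ Finset.range d,
        ∑ j ∈ Finset.Icc (-(d:ℤ)+1) ((m:ℕ):ℤ), e j p * ρ^(-j) * Real.log ρ^p
      = (f ρ - c * ρ^d - ∑ p ∈ Finset.range d, ∑ j ∈ JS,
          en n j p * ρ^(-j) * Real.log ρ^p)
      + (∑ p ∈ Finset.range d, ∑ j ∈ JS, (en n j p - e j p) * ρ^(-j) * Real.log ρ^p)
      + (∑ p ∈ Finset.range d, ∑ j ∈ JT, e j p * ρ^(-j) * Real.log ρ^p) := by
    have h3 : ∑ p ∈ Finset.range d, ∑ j ∈ JS, (en n j p - e j p) * ρ^(-j) * Real.log ρ^p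
        = (∑ p ∈ Finset.range d, ∑ j ∈ JS, en n j p * ρ^(-j) * Real.log ρ^p)
          - (∑ p ∈ Finset.range d, ∑ j ∈ JS, e j p * ρ^(-j) * Real.log ρ^p) := by
      rw [← Finset.sum_sub_distrib]
      apply Finset.sum_congr rfl
      intro p _
      rw [← Finset.sum_sub_distrib]
      apply Finset.sum_congr rfl
      intro j _
      ring
    have h4 : ∑ p ∈ Finset.range d, ∑ j ∈ JS, e j p * ρ^(-j) * Real.log ρ^p
        = (∑ p ∈ Finset.range d, ∑ j ∈ Finset.Icc (-(d:ℤ)+1) ((m:ℕ):ℤ),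
            e j p * ρ^(-j) * Real.log ρ^p)
          + (∑ p ∈ Finset.range d, ∑ j ∈ JT, e j p * ρ^(-j) * Real.log ρ^p) := by
      rw [← Finset.sum_add_distrib]
      apply Finset.sum_congr rfl
      intro p _
      rw [← hunion, Finset.sum_union hdisj]
    rw [h3, h4]
    ring
  rw [hdecomp]
  calc |_ + _ + _| ≤ |f ρ - c * ρ^d - ∑ p ∈ Finset.range d, ∑ j ∈ JS,
          en n j p * ρ^(-j) * Real.log ρ^p|
      + |∑ p ∈ Finset.range d, ∑ j ∈ JS, (en n j p - e j p) * ρ^(-j) * Real.log ρ^p|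
      + |∑ p ∈ Finset.range d, ∑ j ∈ JT, e j p * ρ^(-j) * Real.log ρ^p| :=
        abs_add_three _ _ _
  _ ≤ (C * 2^M) * ρ^(-(M:ℝ)/6) + ((d:ℝ) * (JS.card:ℝ) * Λ) * ρ^(-(M:ℝ)/6)
      + ((d:ℝ) * (JT.card:ℝ) * Λ) * ρ^(-(M:ℝ)/6) := add_le_add (add_le_add hX1 hX2) hX3
  _ = C' * ρ^(-(M:ℝ)/6) := by rw [hC'def]; ring
end

section
/- For every integer k ≤ 0 and every natural number p, there exist real numbers a_0, …, a_{p−1} and an entire function F : ℂ → ℂ that is real-valued on the reals, such that for all t > 0: ∫_1^∞ e^{−tλ} λ^{−k} (ln λ)^p dλ = t^{k−1} · ( Γ(1−k)·(ln(1/t))^p + Σ_{j=0}^{p−1} a_j·(ln(1/t))^j ) + F(t). -/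
open MeasureTheory Set Filter

lemma logB {q : ℕ} {u : ℝ} (hu0 : 0 < u) (hu1 : u ≤ 1) :
    |Real.log u| ^ q ≤ (2*q+2 : ℝ) ^ q * u ^ (-(1/2) : ℝ) := by
  set m : ℝ := 2*q+2 with hm
  have hmpos : (0:ℝ) < m := by positivity
  have h1 : |Real.log u| = Real.log (1/u) := by
    rw [one_div, Real.log_inv, abs_of_nonpos (Real.log_nonpos hu0.le hu1)]
  have h4 : ((1:ℝ)/u) ^ (1/m : ℝ) = u ^ (-(1/m) : ℝ) := by
    rw [one_div, ← Real.rpow_neg_one u, ← Real.rpow_mul hu0.le]; norm_num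
  have h2 : Real.log (1/u) ≤ m * u ^ (-(1/m) : ℝ) := by
    have he : Real.log (1/u) = m * Real.log ((1/u) ^ (1/m : ℝ)) := by
      rw [Real.log_rpow (by positivity)]; field_simp
    have h3 : Real.log ((1/u) ^ (1/m : ℝ)) ≤ (1/u) ^ (1/m : ℝ) := by
      have := Real.log_le_sub_one_of_pos (x := (1/u) ^ (1/m : ℝ)) (by positivity)
      linarith
    rw [he, h4] at *
    exact mul_le_mul_of_nonneg_left (h4 ▸ h3) hmpos.le
  have h5 : |Real.log u| ^ q ≤ (m * u ^ (-(1/m) : ℝ)) ^ q := by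
    apply pow_le_pow_left₀ (abs_nonneg _) (h1 ▸ h2)
  refine h5.trans ?_
  rw [mul_pow, ← Real.rpow_natCast (u ^ (-(1/m) : ℝ)), ← Real.rpow_mul hu0.le]
  apply mul_le_mul_of_nonneg_left _ (by positivity)
  apply Real.rpow_le_rpow_of_exponent_ge hu0 hu1
  rw [neg_mul, neg_le_neg_iff, div_mul_eq_mul_div, div_le_div_iff₀ hmpos (by norm_num), hm]
  push_cast; nlinarith [Nat.cast_nonneg (α := ℝ) q]

lemma intB (q : ℕ) : IntegrableOn (fun u : ℝ => |Real.log u| ^ q) (Ioc (0:ℝ) 1) := by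
  rw [integrableOn_Ioc_iff_integrableOn_Ioo]
  have hm : IntegrableOn (fun u : ℝ => (2*q+2:ℝ)^q * u ^ (-(1/2) : ℝ)) (Ioo (0:ℝ) 1) :=
    ((intervalIntegral.integrableOn_Ioo_rpow_iff one_pos).2 (by norm_num)).const_mul _
  apply Integrable.mono' hm ((Real.measurable_log.abs.pow_const q).aestronglyMeasurable)
  rw [ae_restrict_iff' measurableSet_Ioo]
  filter_upwards with u hu
  rw [Real.norm_eq_abs, abs_of_nonneg (by positivity)]
  exact logB hu.1 hu.2.le

lemma intA (n q : ℕ) :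
    IntegrableOn (fun u : ℝ => Real.exp (-u) * u ^ n * Real.log u ^ q) (Ioi (0:ℝ)) := by
  have hmeas : AEStronglyMeasurable (fun u : ℝ => Real.exp (-u) * u ^ n * Real.log u ^ q)
      (volume.restrict (Ioc (0:ℝ) 1)) := by
    exact (((Real.measurable_exp.comp measurable_neg).mul ((measurable_id.pow_const n))).mul (Real.measurable_log.pow_const q)).aestronglyMeasurable
  rw [← Ioc_union_Ioi_eq_Ioi (zero_le_one (α := ℝ)), integrableOn_union]
  constructor
  · apply Integrable.mono' (intB q) hmeas
    rw [ae_restrict_iff' measurableSet_Ioc]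
    filter_upwards with u hu
    rw [Real.norm_eq_abs, abs_mul, abs_mul, abs_pow, abs_pow]
    have h1 : |Real.exp (-u)| ≤ 1 := by
      rw [Real.abs_exp]; exact Real.exp_le_one_iff.2 (by linarith [hu.1])
    have h2 : |u| ^ n ≤ 1 := by
      apply pow_le_one₀ (abs_nonneg _); rw [abs_of_pos hu.1]; exact hu.2
    calc |Real.exp (-u)| * |u| ^ n * |Real.log u| ^ q
        ≤ 1 * 1 * |Real.log u| ^ q := by
          apply mul_le_mul (mul_le_mul h1 h2 (by positivity) one_pos.le) le_rfl (by positivity)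
          norm_num
      _ = |Real.log u| ^ q := by ring
  · have hG : IntegrableOn (fun u : ℝ => Real.exp (-u) * u ^ ((n + q + 1 : ℝ) - 1)) (Ioi (1:ℝ)) :=
      (Real.GammaIntegral_convergent (by positivity)).mono_set (Ioi_subset_Ioi zero_le_one)
    apply Integrable.mono' hG
    · exact (((Real.measurable_exp.comp measurable_neg).mul ((measurable_id.pow_const n))).mul (Real.measurable_log.pow_const q)).aestronglyMeasurable
    rw [ae_restrict_iff' measurableSet_Ioi]
    filter_upwards with u hu
    rw [mem_Ioi] at hu
    have hu0 : (0:ℝ) < u := by linarith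
    have hlog : 0 ≤ Real.log u := Real.log_nonneg hu.le
    have hlogu : Real.log u ≤ u := (Real.log_le_sub_one_of_pos hu0).trans (by linarith)
    rw [Real.norm_eq_abs, abs_of_nonneg (by positivity)]
    have : u ^ ((n + q + 1 : ℝ) - 1) = u ^ n * u ^ q := by
      rw [show (n + q + 1 : ℝ) - 1 = ((n + q : ℕ) : ℝ) by push_cast; ring,
        Real.rpow_natCast, pow_add]
    rw [this]
    have : Real.log u ^ q ≤ u ^ q := pow_le_pow_left₀ hlog hlogu q
    calc Real.exp (-u) * u ^ n * Real.log u ^ q ≤ Real.exp (-u) * u ^ n * u ^ q := by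
          apply mul_le_mul_of_nonneg_left this (by positivity)
      _ = Real.exp (-u) * (u ^ n * u ^ q) := by ring

noncomputable def Gc (n q : ℕ) : ℝ := ∫ u in Ioi (0:ℝ), Real.exp (-u) * u ^ n * Real.log u ^ q

lemma intH (n p : ℕ) (t : ℝ) (ht : 0 < t) :
    IntegrableOn (fun u : ℝ => ∑ j ∈ Finset.range (p+1),
      ((t⁻¹) ^ n * (p.choose j : ℝ) * Real.log (1/t) ^ (p - j)) *
        (Real.exp (-u) * u ^ n * Real.log u ^ j)) (Ioi (0:ℝ)) := by
  apply integrable_finset_sum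
  intro j _
  exact (intA n j).const_mul _

lemma g_eq (n p : ℕ) (t : ℝ) (ht : 0 < t) {u : ℝ} (hu : u ∈ Ioi (0:ℝ)) :
    Real.exp (-u) * (u/t) ^ n * Real.log (u/t) ^ p =
      ∑ j ∈ Finset.range (p+1),
      ((t⁻¹) ^ n * (p.choose j : ℝ) * Real.log (1/t) ^ (p - j)) *
        (Real.exp (-u) * u ^ n * Real.log u ^ j) := by
  rw [mem_Ioi] at hu
  have hlog : Real.log (u/t) = Real.log u + Real.log (1/t) := by
    rw [Real.log_div hu.ne' ht.ne', one_div, Real.log_inv]; ring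
  rw [hlog, add_pow, Finset.mul_sum]
  apply Finset.sum_congr rfl
  intro j hj
  rw [div_pow, div_eq_mul_inv (u^n), inv_pow]
  ring

lemma subst_formula (n p : ℕ) (t : ℝ) (ht : 0 < t) :
    (∫ x in Ioi (0:ℝ), Real.exp (-(t*x)) * x ^ n * Real.log x ^ p) =
      (t ^ (n+1))⁻¹ * ∑ j ∈ Finset.range (p+1),
        (p.choose j : ℝ) * Real.log (1/t) ^ (p - j) * Gc n j := by
  have h2 := integral_comp_mul_left_Ioi
    (fun u : ℝ => Real.exp (-u) * (u/t) ^ n * Real.log (u/t) ^ p) 0 ht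
  simp only [mul_zero, smul_eq_mul] at h2
  simp_rw [mul_div_cancel_left₀ _ ht.ne'] at h2
  rw [h2]
  rw [setIntegral_congr_fun measurableSet_Ioi (fun u hu => g_eq n p t ht hu)]
  rw [integral_finset_sum _ (fun j _ => (intA n j).const_mul _)]
  simp_rw [integral_const_mul]
  rw [Finset.mul_sum, Finset.mul_sum]
  apply Finset.sum_congr rfl
  intro j hj
  rw [Gc, ← inv_pow, pow_succ]
  ring

lemma int_t (n p : ℕ) (t : ℝ) (ht : 0 < t) :
    IntegrableOn (fun x : ℝ => Real.exp (-(t*x)) * x ^ n * Real.log x ^ p) (Ioi (0:ℝ)) := by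
  have key : (fun x : ℝ => Real.exp (-(t*x)) * x ^ n * Real.log x ^ p) =
      fun x : ℝ => (fun u : ℝ => Real.exp (-u) * (u/t) ^ n * Real.log (u/t) ^ p) (t * x) := by
    funext x; simp only []
    rw [mul_div_cancel_left₀ x ht.ne']
  rw [key]
  apply (integrableOn_Ioi_comp_mul_left_iff
    (fun u : ℝ => Real.exp (-u) * (u/t) ^ n * Real.log (u/t) ^ p) 0 ht).2
  rw [mul_zero]
  exact IntegrableOn.congr_fun (intH n p t ht) (fun u hu => (g_eq n p t ht hu).symm)
    measurableSet_Ioi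

noncomputable def Eint (n p : ℕ) (z : ℂ) (x : ℝ) : ℂ :=
  Complex.exp (-z * x) * ((x:ℂ) ^ n * ((Real.log x : ℝ) : ℂ) ^ p)

lemma normE (n p : ℕ) (z : ℂ) (x : ℝ) :
    ‖Eint n p z x‖ = Real.exp ((-z * x).re) * (|x| ^ n * |Real.log x| ^ p) := by
  simp [Eint, map_mul, map_pow, Complex.norm_exp, Complex.norm_real]

lemma measE (n p : ℕ) (z : ℂ) : Measurable (Eint n p z) := by
  apply ((Complex.measurable_exp.comp ((Complex.measurable_ofReal).const_mul (-z))).mul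
    ((Complex.measurable_ofReal.pow_const n).mul
      ((Complex.measurable_ofReal.comp Real.measurable_log).pow_const p)))

lemma reE (n p : ℕ) (z x : ℝ) (hz : 0 ≤ x) :
    Eint n p z x = ((Real.exp (-(z*x)) * (x ^ n * Real.log x ^ p) : ℝ) : ℂ) := by
  rw [Eint, show -(z:ℂ) * x = ((-(z*x):ℝ):ℂ) by push_cast; ring, ← Complex.ofReal_exp]
  push_cast
  ring

lemma expRe_le (z : ℂ) (x : ℝ) (hx0 : 0 ≤ x) (hx1 : x ≤ 1) (C : ℝ) (hC : ‖z‖ ≤ C) :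
    (-z * x).re ≤ C := by
  have : (-z * (x:ℂ)).re = -(z.re * x) := by simp [Complex.mul_re]
  rw [this]
  have h1 : -(z.re * x) ≤ |z.re| * x := by
    rw [neg_mul_eq_neg_mul]
    exact mul_le_mul_of_nonneg_right (neg_le_abs _) hx0
  have h2 : |z.re| * x ≤ C * 1 :=
    mul_le_mul ((Complex.abs_re_le_norm z).trans hC) hx1 hx0
      (le_trans (abs_nonneg _) ((Complex.abs_re_le_norm z).trans hC))
  linarith

lemma intC (n p : ℕ) (z : ℂ) : IntegrableOn (Eint n p z) (Ioc (0:ℝ) 1) := by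
  apply Integrable.mono' (((intB p).const_mul (Real.exp ‖z‖)))
    (measE n p z).aestronglyMeasurable
  rw [ae_restrict_iff' measurableSet_Ioc]
  filter_upwards with x hx
  rw [normE]
  have h2 : |x| ^ n ≤ 1 := by
    apply pow_le_one₀ (abs_nonneg _); rw [abs_of_pos hx.1]; exact hx.2
  calc Real.exp ((-z * x).re) * (|x| ^ n * |Real.log x| ^ p)
      ≤ Real.exp ‖z‖ * (1 * |Real.log x| ^ p) := by
        apply mul_le_mul (Real.exp_le_exp.2 (expRe_le z x hx.1.le hx.2 _ le_rfl))
          (mul_le_mul_of_nonneg_right h2 (by positivity)) (by positivity) (by positivity)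
    _ = Real.exp ‖z‖ * |Real.log x| ^ p := by ring

lemma diffF (n p : ℕ) :
    Differentiable ℂ (fun z : ℂ => ∫ x in Ioc (0:ℝ) 1, Eint n p z x) := by
  intro z₀
  have key := hasDerivAt_integral_of_dominated_loc_of_deriv_le (μ := volume.restrict (Ioc (0:ℝ) 1))
    (F := fun z x => Eint n p z x)
    (F' := fun z x => (Complex.exp (-z * x) * (-(x:ℂ))) * ((x:ℂ) ^ n * ((Real.log x : ℝ):ℂ) ^ p))
    (x₀ := z₀) (bound := fun x => Real.exp (‖z₀‖ + 1) * |Real.log x| ^ p)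
    (Metric.ball_mem_nhds z₀ one_pos) ?_ ((intC n p z₀)) ?_ ?_ ?_ ?_
  · exact key.2.differentiableAt
  · filter_upwards with z using (measE n p z).aestronglyMeasurable
  · apply Measurable.aestronglyMeasurable
    exact ((Complex.measurable_exp.comp ((Complex.measurable_ofReal).const_mul (-z₀))).mul
      Complex.measurable_ofReal.neg).mul
      ((Complex.measurable_ofReal.pow_const n).mul
        ((Complex.measurable_ofReal.comp Real.measurable_log).pow_const p))
  · rw [ae_restrict_iff' measurableSet_Ioc]
    filter_upwards with x hx
    intro z hz
    have hzn : ‖z‖ ≤ ‖z₀‖ + 1 := by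
      have := mem_ball_iff_norm.1 hz
      calc ‖z‖ = ‖z₀ + (z - z₀)‖ := by ring_nf
        _ ≤ ‖z₀‖ + ‖z - z₀‖ := norm_add_le _ _
        _ ≤ ‖z₀‖ + 1 := by linarith
    rw [norm_mul, norm_mul, norm_mul, norm_neg]
    simp only [Complex.norm_exp, Complex.norm_real, Real.norm_eq_abs, norm_pow]
    have h2 : |x| ^ n ≤ 1 := by
      apply pow_le_one₀ (abs_nonneg _); rw [abs_of_pos hx.1]; exact hx.2
    have h3 : |x| ≤ 1 := by rw [abs_of_pos hx.1]; exact hx.2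
    calc Real.exp ((-z * x).re) * |x| * (|x| ^ n * |Real.log x| ^ p)
        ≤ Real.exp (‖z₀‖ + 1) * 1 * (1 * |Real.log x| ^ p) := by
          apply mul_le_mul
          · exact mul_le_mul (Real.exp_le_exp.2 (expRe_le z x hx.1.le hx.2 _ hzn)) h3
              (abs_nonneg _) (Real.exp_pos _).le
          · exact mul_le_mul_of_nonneg_right h2 (by positivity)
          · positivity
          · positivity
      _ = Real.exp (‖z₀‖ + 1) * |Real.log x| ^ p := by ring
  · exact (intB p).const_mul _
  · rw [ae_restrict_iff' measurableSet_Ioc]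
    filter_upwards with x hx
    intro z hz
    have hinner : HasDerivAt (fun z : ℂ => -z * (x:ℂ)) (-(x:ℂ)) z := by
      simpa using ((hasDerivAt_id z).neg.mul_const (x:ℂ))
    have hexp : HasDerivAt (fun z : ℂ => Complex.exp (-z * x))
        (Complex.exp (-z * x) * (-(x:ℂ))) z :=
      (Complex.hasDerivAt_exp (-z * x)).comp z hinner
    exact hexp.mul_const _

lemma myOfReal (f : ℝ → ℝ) (μ : Measure ℝ) :
    (∫ x, ((f x : ℝ) : ℂ) ∂μ) = ((∫ x, f x ∂μ : ℝ) : ℂ) :=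
  integral_ofReal

theorem laplace_integral_expansion_nonpos_k (k : ℤ) (hk : k ≤ 0) (p : ℕ) :
    ∃ (a : ℕ → ℝ) (F : ℂ → ℂ), Differentiable ℂ F ∧ (∀ x : ℝ, (F x).im = 0) ∧
      ∀ t : ℝ, 0 < t →
        (∫ x in Set.Ioi (1 : ℝ), Real.exp (-t * x) * x ^ (-k) * Real.log x ^ p) =
          t ^ (k - 1) *
            (Real.Gamma (1 - (k : ℝ)) * Real.log (1 / t) ^ p +
              ∑ j ∈ Finset.range p, a j * Real.log (1 / t) ^ j) +
          (F t).re := by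
  set n : ℕ := (-k).toNat with hn
  have hnk : ((n:ℤ)) = -k := Int.toNat_of_nonneg (by omega)
  refine ⟨fun m => (p.choose (p - m) : ℝ) * Gc n (p - m),
    fun z => -∫ x in Ioc (0:ℝ) 1, Eint n p z x, (diffF n p).neg, ?_, ?_⟩
  · intro x
    have hre : (∫ u in Ioc (0:ℝ) 1, Eint n p (x:ℂ) u)
        = ((∫ u in Ioc (0:ℝ) 1, Real.exp (-(x*u)) * (u ^ n * Real.log u ^ p) : ℝ) : ℂ) := by
      rw [setIntegral_congr_fun measurableSet_Ioc (fun u hu => reE n p x u hu.1.le)]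
      exact myOfReal _ _
    simp [hre]
  · intro t ht
    have hL : ∀ x : ℝ, Real.exp (-t * x) * x ^ (-k) * Real.log x ^ p
        = Real.exp (-(t*x)) * x ^ n * Real.log x ^ p := by
      intro x
      rw [← hnk, zpow_natCast, neg_mul]
    simp_rw [hL]
    -- split the integral
    have hsplit : (∫ x in Ioi (0:ℝ), Real.exp (-(t*x)) * x ^ n * Real.log x ^ p)
        = (∫ x in Ioc (0:ℝ) 1, Real.exp (-(t*x)) * x ^ n * Real.log x ^ p)
          + ∫ x in Ioi (1:ℝ), Real.exp (-(t*x)) * x ^ n * Real.log x ^ p := by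
      rw [← Ioc_union_Ioi_eq_Ioi (zero_le_one (α := ℝ))]
      exact setIntegral_union Ioc_disjoint_Ioi_same measurableSet_Ioi
        ((int_t n p t ht).mono_set Ioc_subset_Ioi_self)
        ((int_t n p t ht).mono_set (Ioi_subset_Ioi zero_le_one))
    -- the F value
    have hFval : ((-∫ x in Ioc (0:ℝ) 1, Eint n p (t:ℂ) x).re)
        = -∫ x in Ioc (0:ℝ) 1, Real.exp (-(t*x)) * x ^ n * Real.log x ^ p := by
      rw [setIntegral_congr_fun measurableSet_Ioc (fun u hu => reE n p t u hu.1.le),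
        myOfReal]
      rw [Complex.neg_re, Complex.ofReal_re]
      congr 1
      apply setIntegral_congr_fun measurableSet_Ioc
      intro u hu
      ring
    -- zpow
    have hzpow : t ^ (k - 1) = (t ^ (n+1))⁻¹ := by
      rw [show k - 1 = -(((n+1:ℕ)):ℤ) by omega, zpow_neg, zpow_natCast]
    -- Gamma
    have hkR : (k:ℝ) = -(n:ℝ) := by
      have : k = -(n:ℤ) := by omega
      exact_mod_cast this
    have hGam : Real.Gamma (1 - (k:ℝ)) = Gc n 0 := by
      rw [show (1 - (k:ℝ)) = (n:ℝ)+1 by rw [hkR]; ring,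
        Real.Gamma_eq_integral (by positivity), Gc]
      apply setIntegral_congr_fun measurableSet_Ioi
      intro x hx
      simp only [pow_zero, mul_one]
      rw [show ((n:ℝ)+1)-1 = ((n:ℕ):ℝ) by push_cast; ring, Real.rpow_natCast]
    -- sum manipulation
    have hsum : ∑ j ∈ Finset.range (p+1),
          (p.choose j : ℝ) * Real.log (1/t) ^ (p - j) * Gc n j
        = Gc n 0 * Real.log (1/t) ^ p
          + ∑ j ∈ Finset.range p,
              ((p.choose (p - j) : ℝ) * Gc n (p - j)) * Real.log (1/t) ^ j := by
      rw [Finset.sum_range_succ']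
      rw [← Finset.sum_range_reflect (fun j => ((p.choose (p - j) : ℝ) * Gc n (p - j))
        * Real.log (1/t) ^ j) p]
      have hterm : ∀ i ∈ Finset.range p,
          ((p.choose (p - (p - 1 - i)) : ℝ) * Gc n (p - (p - 1 - i)))
            * Real.log (1/t) ^ (p - 1 - i)
          = (p.choose (i+1) : ℝ) * Real.log (1/t) ^ (p - (i+1)) * Gc n (i+1) := by
        intro i hi
        rw [Finset.mem_range] at hi
        rw [show p - (p - 1 - i) = i + 1 by omega, show p - 1 - i = p - (i+1) by omega]
        ring
      rw [Finset.sum_congr rfl hterm]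
      simp
      ring
    have hresult := subst_formula n p t ht
    rw [hsplit] at hresult
    rw [hFval, hzpow, hGam]
    rw [hsum] at hresult
    linarith [hresult]
end

section
/- For every integer k and every natural number p, there exist real numbers a''_0, …, a''_{p−1} and an entire function F : ℂ → ℂ that is real-valued on the reals, such that for all t > 0: ∫_1^∞ e^{−tλ} λ^{−k−1/2} (ln λ)^p dλ = t^{k−1/2} · ( Γ(1/2 − k)·(ln(1/t))^p + Σ_{j=0}^{p−1} a''_j·(ln(1/t))^j ) + F(t). -/
open MeasureTheory Set Metric Filter Complex Topology

noncomputable section LaplaceHalfAux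

def cE (t : ℝ) (q n : ℕ) : ℂ := (-1)^q * q.factorial * (-(t:ℂ))^n / n.factorial

def EE (t : ℝ) (q : ℕ) (s : ℂ) : ℂ := ∑' n : ℕ, cE t q n * (s + n) ^ (-(q+1) : ℤ)

lemma norm_cE (t : ℝ) (q n : ℕ) : ‖cE t q n‖ = q.factorial * |t|^n / n.factorial := by
  simp [cE, norm_div, norm_mul, norm_pow, abs_of_nonneg]

lemma zpow_neg_norm_le {z : ℂ} {ε : ℝ} (hε : 0 < ε) (h : ε ≤ ‖z‖) (m : ℕ) :
    ‖z ^ (-(m+1) : ℤ)‖ ≤ (ε⁻¹)^(m+1) := by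
  have hz : (0:ℝ) < ‖z‖ := lt_of_lt_of_le hε h
  rw [norm_zpow, show (-(m+1:ℤ)) = -((m+1:ℕ):ℤ) by push_cast; ring, zpow_neg, zpow_natCast,
    inv_pow]
  exact inv_anti₀ (pow_pos hε _) (pow_le_pow_left₀ hε.le h _)

lemma summable_EE {t : ℝ} {ε : ℝ} (hε : 0 < ε) (q : ℕ) {s : ℂ}
    (h : ∀ n : ℕ, ε ≤ ‖s + n‖) :
    Summable (fun n : ℕ => cE t q n * (s + n) ^ (-(q+1) : ℤ)) := by
  apply Summable.of_norm_bounded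
    (g := fun n : ℕ => (q.factorial * (ε⁻¹)^(q+1)) * (|t|^n / n.factorial))
  · exact ((Real.summable_pow_div_factorial |t|).mul_left _)
  · intro n
    rw [norm_mul, norm_cE]
    calc q.factorial * |t|^n / n.factorial * ‖(s + n) ^ (-(q+1) : ℤ)‖
        ≤ q.factorial * |t|^n / n.factorial * (ε⁻¹)^(q+1) := by
          apply mul_le_mul_of_nonneg_left (zpow_neg_norm_le hε (h n) q)
          positivity
      _ = (q.factorial * (ε⁻¹)^(q+1)) * (|t|^n / n.factorial) := by ring

lemma hasDerivAt_EE_term (t : ℝ) (q n : ℕ) {s : ℂ} (h : s + n ≠ 0) :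
    HasDerivAt (fun z => cE t q n * (z + n) ^ (-(q+1) : ℤ))
      (cE t (q+1) n * (s + n) ^ (-(q+2) : ℤ)) s := by
  have h1 : HasDerivAt (fun z : ℂ => z + n) 1 s := by
    simpa using (hasDerivAt_id s).add_const (n : ℂ)
  have h2 := (hasDerivAt_zpow (-(q+1) : ℤ) (s + n) (Or.inl h)).comp s h1
  have h3 := h2.const_mul (cE t q n)
  refine h3.congr_deriv ?_
  have : cE t (q+1) n = cE t q n * (-(q+1) : ℤ) := by
    simp only [cE, Nat.factorial_succ]
    push_cast
    ring
  rw [this]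
  have : (-(q+1) : ℤ) - 1 = (-(q+2) : ℤ) := by ring
  rw [this]
  ring

lemma hasDerivAt_EE {t : ℝ} {ε : ℝ} (hε : 0 < ε) (q : ℕ) {s₁ : ℂ}
    (hb : ∀ s ∈ ball s₁ ε, ∀ n : ℕ, ε ≤ ‖s + n‖) {s : ℂ} (hs : s ∈ ball s₁ ε) :
    HasDerivAt (EE t q) (EE t (q+1) s) s := by
  have hne : ∀ s' ∈ ball s₁ ε, ∀ n : ℕ, s' + n ≠ 0 := by
    intro s' hs' n h0
    have := hb s' hs' n
    rw [h0] at this; simp at this; linarith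
  exact hasDerivAt_tsum_of_isPreconnected
    (u := fun n : ℕ => ((q+1).factorial * (ε⁻¹)^(q+2)) * (|t|^n / n.factorial))
    (((Real.summable_pow_div_factorial |t|).mul_left _))
    isOpen_ball (convex_ball s₁ ε).isPreconnected
    (fun n y hy => hasDerivAt_EE_term t q n (hne y hy n))
    (fun n y hy => by
      rw [norm_mul, norm_cE]
      calc (q+1).factorial * |t|^n / n.factorial * ‖(y + n) ^ (-(q+2) : ℤ)‖
          ≤ (q+1).factorial * |t|^n / n.factorial * (ε⁻¹)^(q+2) := by
            apply mul_le_mul_of_nonneg_left (zpow_neg_norm_le hε (hb y hy n) (q+1))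
            positivity
        _ = ((q+1).factorial * (ε⁻¹)^(q+2)) * (|t|^n / n.factorial) := by ring)
    (mem_ball_self hε)
    (summable_EE hε q (hb s₁ (mem_ball_self hε)))
    hs


def hterm (t : ℝ) (q : ℕ) (s : ℂ) (x : ℝ) : ℂ :=
  (Real.exp (-t*x) : ℂ) * Complex.exp ((s - 1) * (Real.log x : ℂ)) * (Real.log x : ℂ)^q

def HH (t : ℝ) (q : ℕ) (s : ℂ) : ℂ := ∫ x in Ioi (1:ℝ), hterm t q s x

lemma pow_exp_bounded (m : ℕ) {c : ℝ} (hc : 0 < c) :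
    ∃ M : ℝ, ∀ x : ℝ, 1 ≤ x → x ^ m * Real.exp (-c*x) ≤ M := by
  have h1 : Tendsto (fun x : ℝ => (c*x) ^ m * Real.exp (-(c*x))) atTop (𝓝 0) :=
    (Real.tendsto_pow_mul_exp_neg_atTop_nhds_zero m).comp
      (tendsto_id.const_mul_atTop hc)
  have h2 : Tendsto (fun x : ℝ => x ^ m * Real.exp (-c*x)) atTop (𝓝 ((c^m)⁻¹ * 0)) := by
    apply Tendsto.congr' _ (h1.const_mul ((c^m)⁻¹))
    filter_upwards with x
    rw [mul_pow, neg_mul]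
    field_simp
  rw [mul_zero] at h2
  obtain ⟨X, hX⟩ := (h2.eventually (eventually_le_nhds (by norm_num : (0:ℝ) < 1))).exists_forall_of_atTop
  obtain ⟨M0, hM0⟩ := (isCompact_Icc (a := (1:ℝ)) (b := X)).exists_bound_of_continuousOn
    (f := fun x : ℝ => x ^ m * Real.exp (-c*x))
    (by fun_prop)
  refine ⟨max M0 1, fun x hx => ?_⟩
  rcases le_or_gt x X with h | h
  · exact le_trans (le_trans (le_abs_self _) (hM0 x ⟨hx, h⟩)) (le_max_left _ _)
  · exact le_trans (hX x h.le) (le_max_right _ _)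

lemma integrableOn_exp_rpow_log {t : ℝ} (ht : 0 < t) (a : ℝ) (q : ℕ) :
    IntegrableOn (fun x : ℝ => Real.exp (-t*x) * x ^ a * Real.log x ^ q) (Ioi 1) := by
  obtain ⟨M, hM⟩ := pow_exp_bounded (⌈a⌉₊ + q) (half_pos ht)
  have hM0 : 0 ≤ M := le_trans (by positivity) (hM 1 le_rfl)
  apply Integrable.mono' ((exp_neg_integrableOn_Ioi 1 (half_pos ht)).const_mul M)
  · apply ContinuousOn.aestronglyMeasurable _ measurableSet_Ioi
    apply ContinuousOn.mul
    apply ContinuousOn.mul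
    · fun_prop
    · exact fun x hx => (Real.continuousAt_rpow_const x a
        (Or.inl (ne_of_gt (lt_trans one_pos hx)))).continuousWithinAt
    · apply ContinuousOn.pow
      exact fun x hx => (Real.continuousAt_log (ne_of_gt (lt_trans one_pos hx))).continuousWithinAt
  · filter_upwards [ae_restrict_mem measurableSet_Ioi] with x hx
    have hx1 : (1:ℝ) ≤ x := le_of_lt hx
    have hx0 : (0:ℝ) < x := lt_trans one_pos hx
    have hlog : 0 ≤ Real.log x := Real.log_nonneg hx1
    have h1 : x ^ a ≤ x ^ (⌈a⌉₊ : ℝ) :=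
      Real.rpow_le_rpow_of_exponent_le hx1 (Nat.le_ceil a)
    have h2 : Real.log x ^ q ≤ x ^ q := by
      apply pow_le_pow_left₀ hlog
      linarith [Real.log_le_sub_one_of_pos hx0]
    have hprod : x ^ a * Real.log x ^ q ≤ x ^ (⌈a⌉₊ + q) := by
      calc x ^ a * Real.log x ^ q ≤ x ^ (⌈a⌉₊ : ℝ) * x ^ q := by
            apply mul_le_mul h1 h2 (by positivity) (by positivity)
        _ = x ^ (⌈a⌉₊ + q) := by
            rw [Real.rpow_natCast, ← pow_add]
    have key : Real.exp (-t*x) * x ^ a * Real.log x ^ q ≤ Real.exp (-t*x) * x ^ (⌈a⌉₊ + q) := by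
      calc Real.exp (-t*x) * x ^ a * Real.log x ^ q
          = Real.exp (-t*x) * (x ^ a * Real.log x ^ q) := by ring
        _ ≤ Real.exp (-t*x) * x ^ (⌈a⌉₊ + q) :=
            mul_le_mul_of_nonneg_left hprod (Real.exp_nonneg _)
    have key2 : Real.exp (-t*x) * x ^ (⌈a⌉₊ + q) ≤ M * Real.exp (-(t/2)*x) := by
      have : Real.exp (-t*x) = Real.exp (-(t/2)*x) * Real.exp (-(t/2)*x) := by
        rw [← Real.exp_add]; congr 1; ring
      rw [this]
      calc Real.exp (-(t/2)*x) * Real.exp (-(t/2)*x) * x ^ (⌈a⌉₊ + q)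
          = (x ^ (⌈a⌉₊ + q) * Real.exp (-(t/2)*x)) * Real.exp (-(t/2)*x) := by ring
        _ ≤ M * Real.exp (-(t/2)*x) :=
            mul_le_mul_of_nonneg_right (hM x hx1) (Real.exp_nonneg _)
    rw [Real.norm_eq_abs, _root_.abs_of_nonneg (by positivity)]
    exact le_trans key key2

lemma norm_hterm {t : ℝ} (q : ℕ) (s : ℂ) {x : ℝ} (hx : x ∈ Ioi (1:ℝ)) :
    ‖hterm t q s x‖ = Real.exp (-t*x) * x ^ (s.re - 1) * Real.log x ^ q := by
  have hx0 : (0:ℝ) < x := lt_trans one_pos hx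
  have hlog : 0 ≤ Real.log x := Real.log_nonneg (le_of_lt hx)
  rw [hterm, norm_mul, norm_mul]
  congr 1
  · congr 1
    · rw [Complex.norm_real, Real.norm_eq_abs, _root_.abs_of_nonneg (Real.exp_nonneg _)]
    · rw [Complex.norm_exp, Real.rpow_def_of_pos hx0]
      congr 1
      simp [Complex.mul_re]
      ring
  · rw [norm_pow, Complex.norm_real, Real.norm_eq_abs, _root_.abs_of_nonneg hlog]

lemma continuousOn_hterm (t : ℝ) (q : ℕ) (s : ℂ) :
    ContinuousOn (hterm t q s) (Ioi (1:ℝ)) := by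
  have hlog : ContinuousOn Real.log (Ioi (1:ℝ)) :=
    fun x hx => (Real.continuousAt_log (ne_of_gt (lt_trans one_pos hx))).continuousWithinAt
  apply ContinuousOn.mul
  apply ContinuousOn.mul
  · fun_prop
  · exact Complex.continuous_exp.comp_continuousOn
      ((continuousOn_const.mul (Complex.continuous_ofReal.comp_continuousOn hlog)))
  · exact (Complex.continuous_ofReal.comp_continuousOn hlog).pow q

lemma integrableOn_hterm {t : ℝ} (ht : 0 < t) (q : ℕ) (s : ℂ) :
    IntegrableOn (hterm t q s) (Ioi 1) := by
  apply Integrable.mono' (integrableOn_exp_rpow_log ht (s.re - 1) q)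
  · exact (continuousOn_hterm t q s).aestronglyMeasurable measurableSet_Ioi
  · filter_upwards [ae_restrict_mem measurableSet_Ioi] with x hx
    rw [norm_hterm q s hx]






lemma hasDerivAt_hterm (t : ℝ) (q : ℕ) (s : ℂ) (x : ℝ) :
    HasDerivAt (fun z => hterm t q z x) (hterm t (q+1) s x) s := by
  have h1 : HasDerivAt (fun z : ℂ => (z - 1) * (Real.log x : ℂ)) (Real.log x : ℂ) s := by
    simpa using ((hasDerivAt_id s).sub_const 1).mul_const (Real.log x : ℂ)
  have h2 := h1.cexp
  have h3 := (h2.const_mul (Real.exp (-t*x) : ℂ)).mul_const ((Real.log x : ℂ)^q)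
  refine h3.congr_deriv ?_
  simp only [hterm]
  ring

lemma hasDerivAt_HH {t : ℝ} (ht : 0 < t) (q : ℕ) (s₁ : ℂ) :
    HasDerivAt (HH t q) (HH t (q+1) s₁) s₁ := by
  have key := hasDerivAt_integral_of_dominated_loc_of_deriv_le
    (F := fun s x => hterm t q s x) (F' := fun s x => hterm t (q+1) s x)
    (x₀ := s₁) (s := ball s₁ 1) (ball_mem_nhds s₁ one_pos)
    (bound := fun x => Real.exp (-t*x) * x ^ (s₁.re) * Real.log x ^ (q+1))
    (μ := volume.restrict (Ioi 1))
    (Eventually.of_forall fun s =>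
      (continuousOn_hterm t q s).aestronglyMeasurable measurableSet_Ioi)
    (integrableOn_hterm ht q s₁)
    ((continuousOn_hterm t (q+1) s₁).aestronglyMeasurable measurableSet_Ioi)
    ?_ (integrableOn_exp_rpow_log ht s₁.re (q+1))
    (Eventually.of_forall fun x => fun s _ => hasDerivAt_hterm t q s x)
  · exact key.2
  · filter_upwards [ae_restrict_mem measurableSet_Ioi] with x hx
    intro s hs
    rw [norm_hterm (q+1) s hx]
    have hx1 : (1:ℝ) ≤ x := le_of_lt hx
    have h1 : x ^ (s.re - 1) ≤ x ^ s₁.re := by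
      apply Real.rpow_le_rpow_of_exponent_le hx1
      have := Complex.abs_re_le_norm (s - s₁)
      rw [mem_ball, Complex.dist_eq] at hs
      have h2 : |s.re - s₁.re| < 1 := by
        calc |s.re - s₁.re| = |(s - s₁).re| := by simp
          _ ≤ ‖s - s₁‖ := Complex.abs_re_le_norm _
          _ < 1 := hs
      have := abs_lt.mp h2
      linarith [this.2]
    have hlog : 0 ≤ Real.log x := Real.log_nonneg hx1
    calc Real.exp (-t*x) * x ^ (s.re - 1) * Real.log x ^ (q+1)
        ≤ Real.exp (-t*x) * x ^ s₁.re * Real.log x ^ (q+1) := by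
          apply mul_le_mul_of_nonneg_right _ (by positivity)
          exact mul_le_mul_of_nonneg_left h1 (Real.exp_nonneg _)
      _ = _ := rfl

lemma iteratedDeriv_HH {t : ℝ} (ht : 0 < t) (q : ℕ) :
    iteratedDeriv q (HH t 0) = HH t q := by
  induction q with
  | zero => simp [iteratedDeriv_zero]
  | succ q ih =>
    rw [iteratedDeriv_succ, ih]
    funext s
    exact (hasDerivAt_HH ht q s).deriv


def UU : Set ℂ := {s : ℂ | ∀ m : ℕ, s ≠ -(m:ℂ)}

lemma isOpen_UU : IsOpen UU := by
  have h1 : IsClosed ((fun n : ℤ => (n:ℂ)) '' (Iic 0)) := by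
    have hemb : IsClosedEmbedding (fun n : ℤ => (n:ℂ)) := by
      have : (fun n : ℤ => (n:ℂ)) = (fun x : ℝ => (x:ℂ)) ∘ (fun n : ℤ => (n:ℝ)) := by
        funext n; simp
      rw [this]
      exact (Complex.isometry_ofReal.isClosedEmbedding).comp Int.isClosedEmbedding_coe_real
    exact hemb.isClosedMap _ isClosed_Iic
  have h2 : UU = ((fun n : ℤ => (n:ℂ)) '' (Iic 0))ᶜ := by
    ext s
    constructor
    · intro hU hmem
      obtain ⟨n, hn, hns⟩ := hmem
      rw [mem_Iic] at hn
      apply hU (-n).toNat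
      rw [← hns]
      have h3 : ((-n).toNat : ℤ) = -n := Int.toNat_of_nonneg (by omega)
      have h4 : (((-n).toNat : ℤ) : ℂ) = ((-n : ℤ) : ℂ) := by rw [h3]
      push_cast at h4 ⊢
      rw [h4]
      ring
    · intro hc m hm
      apply hc
      exact ⟨-(m:ℤ), by simp, by rw [hm]; push_cast; ring⟩
  rw [h2]
  exact h1.isOpen_compl

lemma isPreconnected_UU : IsPreconnected UU := by
  have hcount : Set.Countable (Set.range (fun m : ℕ => -(m:ℂ))) := countable_range _
  have h2 : UU = (Set.range (fun m : ℕ => -(m:ℂ)))ᶜ := by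
    ext s; simp [UU, eq_comm, not_exists]
  rw [h2]
  exact (hcount.isConnected_compl_of_one_lt_rank
    (by rw [Complex.rank_real_complex]; norm_num)).isPreconnected

lemma exists_ball_bound {s₁ : ℂ} (h : s₁ ∈ UU) :
    ∃ ε : ℝ, 0 < ε ∧ ε ≤ 1/2 ∧ ∀ s ∈ ball s₁ ε, ∀ n : ℕ, ε ≤ ‖s + n‖ := by
  set N : ℕ := ⌈‖s₁‖⌉₊ + 1 with hN
  have hpos : ∀ n : ℕ, 0 < ‖s₁ + n‖ := by
    intro n
    rw [norm_pos_iff]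
    intro h0
    exact h n (by linear_combination h0)
  set δ : ℝ := min 1 ((Finset.range N).inf' (by simp [hN]) (fun n => ‖s₁ + n‖)) with hδ
  have hδpos : 0 < δ := by
    apply lt_min one_pos
    rw [Finset.lt_inf'_iff]
    exact fun n _ => hpos n
  have hδ1 : δ ≤ 1 := min_le_left _ _
  have hδle : ∀ n < N, δ ≤ ‖s₁ + n‖ := by
    intro n hn
    exact le_trans (min_le_right _ _) (Finset.inf'_le _ (Finset.mem_range.2 hn))
  refine ⟨δ/4, by positivity, by linarith, ?_⟩
  intro s hs n
  have hs' : ‖s - s₁‖ < δ/4 := by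
    rw [mem_ball, Complex.dist_eq] at hs
    exact hs
  rcases lt_or_ge n N with hn | hn
  · have h1 : ‖s₁ + n‖ ≤ ‖s + n‖ + ‖s - s₁‖ := by
      have h := norm_add_le (s + n) (s₁ - s)
      rw [show s + n + (s₁ - s) = s₁ + n by ring] at h
      rw [norm_sub_rev s₁ s] at h
      exact h
    have := hδle n hn
    linarith
  · have h1 : (N:ℝ) ≤ n := by exact_mod_cast hn
    have h2 : ‖s₁‖ ≤ N - 1 := by
      have : (‖s₁‖ : ℝ) ≤ ⌈‖s₁‖⌉₊ := Nat.le_ceil _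
      have hNc : ((⌈‖s₁‖⌉₊ : ℕ) : ℝ) = (N:ℝ) - 1 := by rw [hN]; push_cast; ring
      linarith [hNc ▸ this]
    have h3 : ‖s‖ ≤ ‖s₁‖ + δ/4 := by
      have h := norm_add_le s₁ (s - s₁)
      rw [show s₁ + (s - s₁) = s by ring] at h
      linarith
    have h4 : (n:ℝ) - ‖s‖ ≤ ‖s + n‖ := by
      have h := norm_add_le (s + n) (-s)
      rw [show s + n + -s = (n:ℂ) by ring, norm_neg, Complex.norm_natCast] at h
      linarith
    linarith

lemma mem_UU_of_ball {s₁ : ℂ} {ε : ℝ} (hε : 0 < ε)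
    (hb : ∀ s ∈ ball s₁ ε, ∀ n : ℕ, ε ≤ ‖s + n‖) {s : ℂ} (hs : s ∈ ball s₁ ε) : s ∈ UU := by
  intro m hc
  have := hb s hs m
  rw [hc] at this
  simp at this
  linarith

lemma one_mem_UU : (1:ℂ) ∈ UU := by
  intro m hc
  have := congrArg Complex.re hc
  simp at this
  have : (0:ℝ) ≤ m := m.cast_nonneg
  linarith



lemma hasDerivAt_conj_conj {f : ℂ → ℂ} {d z : ℂ} (h : HasDerivAt f d ((starRingEnd ℂ) z)) :
    HasDerivAt (fun w => (starRingEnd ℂ) (f ((starRingEnd ℂ) w))) ((starRingEnd ℂ) d) z := by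
  rw [hasDerivAt_iff_tendsto_slope] at h ⊢
  have hconj : Tendsto (starRingEnd ℂ) (𝓝[≠] z) (𝓝[≠] ((starRingEnd ℂ) z)) := by
    apply tendsto_nhdsWithin_of_tendsto_nhds_of_eventually_within
    · exact (Complex.continuous_conj.tendsto z).mono_left nhdsWithin_le_nhds
    · filter_upwards [self_mem_nhdsWithin] with w hw
      simp only [mem_compl_iff, mem_singleton_iff] at hw ⊢
      exact fun hc => hw ((starRingEnd ℂ).injective hc)
  have hslope : slope (fun w => (starRingEnd ℂ) (f ((starRingEnd ℂ) w))) z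
      = (starRingEnd ℂ) ∘ (slope f ((starRingEnd ℂ) z)) ∘ (starRingEnd ℂ) := by
    funext y
    simp only [Function.comp_apply, slope_def_field, map_div₀, map_sub]
    simp
  rw [hslope]
  exact (Complex.continuous_conj.tendsto d).comp (h.comp hconj)

lemma analyticOnNhd_Gamma : AnalyticOnNhd ℂ Complex.Gamma UU := by
  apply DifferentiableOn.analyticOnNhd _ isOpen_UU
  intro s hs
  exact (Complex.differentiableAt_Gamma s hs).differentiableWithinAt

lemma analyticOnNhd_iteratedDeriv {V : Set ℂ} {f : ℂ → ℂ} (hf : AnalyticOnNhd ℂ f V) (q : ℕ) :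
    AnalyticOnNhd ℂ (iteratedDeriv q f) V := by
  have := hf.iterated_deriv q
  rwa [← iteratedDeriv_eq_iterate] at this

lemma conj_mem_UU {z : ℂ} (hz : z ∈ UU) : (starRingEnd ℂ) z ∈ UU := by
  intro m hc
  apply hz m
  have := congrArg (starRingEnd ℂ) hc
  simp only [Complex.conj_conj, map_neg] at this
  rw [this]
  simp

lemma iteratedDeriv_Gamma_conj (q : ℕ) {z : ℂ} (hz : z ∈ UU) :
    iteratedDeriv q Complex.Gamma ((starRingEnd ℂ) z)
      = (starRingEnd ℂ) (iteratedDeriv q Complex.Gamma z) := by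
  induction q generalizing z with
  | zero => simpa using Complex.Gamma_conj z
  | succ q ih =>
    have hana : AnalyticOnNhd ℂ (iteratedDeriv q Complex.Gamma) UU :=
      analyticOnNhd_iteratedDeriv analyticOnNhd_Gamma q
    have hd : HasDerivAt (iteratedDeriv q Complex.Gamma)
        (deriv (iteratedDeriv q Complex.Gamma) ((starRingEnd ℂ) z)) ((starRingEnd ℂ) z) :=
      ((hana _ (conj_mem_UU hz)).differentiableAt).hasDerivAt
    have h2 := hasDerivAt_conj_conj hd
    have h3 : (fun w => (starRingEnd ℂ) (iteratedDeriv q Complex.Gamma ((starRingEnd ℂ) w)))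
        =ᶠ[𝓝 z] iteratedDeriv q Complex.Gamma := by
      filter_upwards [isOpen_UU.mem_nhds hz] with w hw
      rw [ih hw, Complex.conj_conj]
    have h5 := (h2.congr_of_eventuallyEq h3.symm).deriv
    rw [iteratedDeriv_succ, h5, Complex.conj_conj]

lemma iteratedDeriv_Gamma_real (q : ℕ) (x : ℝ) (hx : (x:ℂ) ∈ UU) :
    iteratedDeriv q Complex.Gamma (x:ℂ)
      = ((iteratedDeriv q Complex.Gamma (x:ℂ)).re : ℂ) := by
  have h := iteratedDeriv_Gamma_conj q hx
  rw [Complex.conj_ofReal] at h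
  exact (Complex.conj_eq_iff_re.mp h.symm).symm

-- Leibniz formula for f(z) * exp(L z)
lemma leibniz_exp {V : Set ℂ} (hV : IsOpen V) {f : ℂ → ℂ} (hf : AnalyticOnNhd ℂ f V)
    (L : ℂ) (q : ℕ) :
    ∀ s ∈ V, iteratedDeriv q (fun z => f z * Complex.exp (L * z)) s
      = (∑ i ∈ Finset.range (q+1), (q.choose i : ℂ) * L^(q-i) * iteratedDeriv i f s)
          * Complex.exp (L * s) := by
  induction q with
  | zero => intro s hs; simp
  | succ q ih =>
    intro s hs
    rw [iteratedDeriv_succ]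
    have hev : iteratedDeriv q (fun z => f z * Complex.exp (L * z)) =ᶠ[𝓝 s]
        (fun z => (∑ i ∈ Finset.range (q+1), (q.choose i : ℂ) * L^(q-i) * iteratedDeriv i f z)
          * Complex.exp (L * z)) :=
      Filter.eventuallyEq_of_mem (hV.mem_nhds hs) (fun z hz => ih z hz)
    rw [hev.deriv_eq]
    have hA : HasDerivAt
        (fun z => ∑ i ∈ Finset.range (q+1), (q.choose i : ℂ) * L^(q-i) * iteratedDeriv i f z)
        (∑ i ∈ Finset.range (q+1), (q.choose i : ℂ) * L^(q-i) * iteratedDeriv (i+1) f s) s := by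
      apply HasDerivAt.fun_sum
      intro i _
      have h1 : HasDerivAt (iteratedDeriv i f) (iteratedDeriv (i+1) f s) s := by
        have := ((analyticOnNhd_iteratedDeriv hf i) s hs).differentiableAt.hasDerivAt
        rwa [← iteratedDeriv_succ] at this
      exact h1.const_mul _
    have hB : HasDerivAt (fun z : ℂ => Complex.exp (L * z)) (L * Complex.exp (L * s)) s := by
      have h1 : HasDerivAt (fun z : ℂ => L * z) L s := by
        simpa using (hasDerivAt_id s).const_mul L
      simpa [mul_comm] using h1.cexp
    rw [(show HasDerivAt (fun z => (∑ i ∈ Finset.range (q+1), (q.choose i : ℂ) * L^(q-i) * iteratedDeriv i f z) * Complex.exp (L * z)) _ s from hA.mul hB).deriv]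
    -- algebra
    have key : (∑ i ∈ Finset.range (q+1), (q.choose i : ℂ) * L^(q-i) * iteratedDeriv (i+1) f s)
        + L * (∑ i ∈ Finset.range (q+1), (q.choose i : ℂ) * L^(q-i) * iteratedDeriv i f s)
        = ∑ i ∈ Finset.range (q+2), ((q+1).choose i : ℂ) * L^(q+1-i) * iteratedDeriv i f s := by
      rw [Finset.sum_range_succ' (fun i => ((q+1).choose i : ℂ) * L^(q+1-i) * iteratedDeriv i f s)]
      have e1 : ∀ i, ((q+1).choose (i+1) : ℂ) = (q.choose i : ℂ) + (q.choose (i+1) : ℂ) := by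
        intro i
        rw [Nat.choose_succ_succ]
        push_cast
        ring
      have e2 : ∀ i, q + 1 - (i+1) = q - i := fun i => by omega
      have hsplit : ∑ i ∈ Finset.range (q+1),
          ((q+1).choose (i+1) : ℂ) * L^(q+1-(i+1)) * iteratedDeriv (i+1) f s
          = (∑ i ∈ Finset.range (q+1), (q.choose i : ℂ) * L^(q-i) * iteratedDeriv (i+1) f s)
            + ∑ i ∈ Finset.range (q+1), (q.choose (i+1) : ℂ) * L^(q-i) * iteratedDeriv (i+1) f s := by
        rw [← Finset.sum_add_distrib]
        apply Finset.sum_congr rfl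
        intro i _
        rw [e1 i, e2 i]
        ring
      rw [hsplit]
      have hLA : L * (∑ i ∈ Finset.range (q+1), (q.choose i : ℂ) * L^(q-i) * iteratedDeriv i f s)
          = (∑ i ∈ Finset.range q, (q.choose (i+1) : ℂ) * L^(q-i) * iteratedDeriv (i+1) f s)
            + ((q.choose 0 : ℂ) * L^(q+1) * iteratedDeriv 0 f s) := by
        rw [Finset.mul_sum, Finset.sum_range_succ' (fun i => L * ((q.choose i : ℂ) * L^(q-i) * iteratedDeriv i f s))]
        congr 1
        · apply Finset.sum_congr rfl
          intro i hi
          rw [Finset.mem_range] at hi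
          have e3 : q - (i+1) + 1 = q - i := by omega
          rw [← e3, pow_succ]
          ring
        · have : q - 0 = q := by omega
          rw [this, pow_succ]
          ring
      have hzero : ∑ i ∈ Finset.range (q+1), (q.choose (i+1) : ℂ) * L^(q-i) * iteratedDeriv (i+1) f s
          = ∑ i ∈ Finset.range q, (q.choose (i+1) : ℂ) * L^(q-i) * iteratedDeriv (i+1) f s := by
        rw [Finset.sum_range_succ]
        simp [Nat.choose_succ_self]
      rw [hzero, hLA]
      simp [Nat.choose_zero_right, Nat.choose_succ_succ]
      ring
    rw [← key]
    ring
  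


def cterm (t : ℝ) (s : ℂ) (x : ℝ) : ℂ := (x:ℂ) ^ (s - 1) * Complex.exp (-((t:ℂ) * (x:ℂ)))

lemma hterm_eq_cterm {t : ℝ} (s : ℂ) {x : ℝ} (hx : x ∈ Ioi (1:ℝ)) :
    hterm t 0 s x = cterm t s x := by
  have hx0 : (0:ℝ) < x := lt_trans one_pos hx
  rw [hterm, cterm, pow_zero, mul_one]
  rw [Complex.cpow_def_of_ne_zero (by exact_mod_cast hx0.ne'),
      ← Complex.ofReal_log hx0.le, mul_comm (s-1) _]
  rw [mul_comm]
  congr 1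
  rw [Complex.ofReal_exp]
  congr 1
  push_cast
  ring

lemma continuousOn_cterm (t : ℝ) (s : ℂ) : ContinuousOn (cterm t s) (Ioc (0:ℝ) 1) := by
  apply ContinuousOn.mul
  · exact fun x hx => (continuousAt_ofReal_cpow_const x (s-1)
      (Or.inr (ne_of_gt hx.1))).continuousWithinAt
  · fun_prop

lemma norm_cterm {t : ℝ} (ht : 0 ≤ t) (s : ℂ) {x : ℝ} (hx : 0 < x) :
    ‖cterm t s x‖ = x ^ (s.re - 1) * Real.exp (-(t*x)) := by
  rw [cterm, norm_mul, Complex.norm_exp,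
    Complex.norm_cpow_eq_rpow_re_of_pos hx]
  have h1 : (s - 1).re = s.re - 1 := by simp
  have h2 : (-((t:ℂ) * x)).re = -(t*x) := by simp
  rw [h1, h2]

lemma integrableOn_cterm_Ioc {t : ℝ} (ht : 0 < t) {s : ℂ} (hs : 0 < s.re) :
    IntegrableOn (cterm t s) (Ioc (0:ℝ) 1) := by
  have hint : IntegrableOn (fun x : ℝ => x ^ (s.re - 1)) (Ioc (0:ℝ) 1) := by
    have := intervalIntegral.intervalIntegrable_rpow' (a := 0) (b := 1) (r := s.re - 1) (by linarith)
    rwa [intervalIntegrable_iff_integrableOn_Ioc_of_le zero_le_one] at this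
  apply Integrable.mono' hint
    ((continuousOn_cterm t s).aestronglyMeasurable measurableSet_Ioc)
  filter_upwards [ae_restrict_mem measurableSet_Ioc] with x hx
  rw [norm_cterm ht.le s hx.1]
  calc x ^ (s.re - 1) * Real.exp (-(t*x)) ≤ x ^ (s.re - 1) * 1 := by
        apply mul_le_mul_of_nonneg_left _ (Real.rpow_nonneg hx.1.le _)
        rw [Real.exp_le_one_iff]
        nlinarith [hx.1]
    _ = x ^ (s.re - 1) := mul_one _

-- termwise
def fn (t : ℝ) (s : ℂ) (n : ℕ) (x : ℝ) : ℂ := ((-(t:ℂ))^n / n.factorial) * (x:ℂ) ^ (s - 1 + n)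

lemma cterm_eq_tsum {t : ℝ} (s : ℂ) {x : ℝ} (hx : 0 < x) :
    cterm t s x = ∑' n : ℕ, fn t s n x := by
  rw [cterm, Complex.exp_eq_exp_ℂ, NormedSpace.exp_eq_tsum_div, ← tsum_mul_left]
  congr 1
  funext n
  rw [fn, Complex.cpow_add _ _ (by exact_mod_cast hx.ne'), Complex.cpow_natCast]
  have h3 : (-((t:ℂ) * x)) = (-(t:ℂ)) * (x:ℂ) := by ring
  rw [h3, mul_pow]
  ring

lemma continuousOn_fn (t : ℝ) (s : ℂ) (n : ℕ) : ContinuousOn (fn t s n) (Ioc (0:ℝ) 1) :=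
  continuousOn_const.mul (fun x hx => (continuousAt_ofReal_cpow_const x (s-1+n)
      (Or.inr (ne_of_gt hx.1))).continuousWithinAt)

lemma integrableOn_fn {t : ℝ} {s : ℂ} (hs : 0 < s.re) (n : ℕ) :
    IntegrableOn (fn t s n) (Ioc (0:ℝ) 1) := by
  have h := (intervalIntegral.intervalIntegrable_cpow' (a := 0) (b := 1) (r := s - 1 + n)
    (by simp; linarith)).const_mul ((-(t:ℂ))^n / n.factorial)
  rwa [intervalIntegrable_iff_integrableOn_Ioc_of_le zero_le_one] at h

lemma norm_fn {t : ℝ} (ht : 0 ≤ t) (s : ℂ) (n : ℕ) {x : ℝ} (hx : 0 < x) :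
    ‖fn t s n x‖ = (t^n / n.factorial) * x ^ (s.re - 1 + n) := by
  rw [fn, norm_mul, norm_div, norm_pow,
    Complex.norm_cpow_eq_rpow_re_of_pos hx]
  have h1 : (s - 1 + n).re = s.re - 1 + n := by simp
  rw [h1]
  congr 2
  · simp [_root_.abs_of_nonneg ht]
  · simp

lemma integral_fn {t : ℝ} {s : ℂ} (hs : 0 < s.re) (n : ℕ) :
    ∫ x in Ioc (0:ℝ) 1, fn t s n x = ((-(t:ℂ))^n / n.factorial) * (s + n)⁻¹ := by
  have hsn : s + n ≠ 0 := by
    intro h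
    have := congrArg Complex.re h
    simp at this
    have : (0:ℝ) ≤ (n:ℝ) := n.cast_nonneg
    linarith
  have h := integral_cpow (a := 0) (b := 1) (r := s - 1 + n)
    (Or.inl (by simp; linarith))
  rw [intervalIntegral.integral_of_le zero_le_one] at h
  have e1 : s - 1 + n + 1 = s + n := by ring
  rw [e1] at h
  push_cast at h
  rw [Complex.one_cpow, Complex.zero_cpow hsn] at h
  simp only [fn]
  rw [MeasureTheory.integral_const_mul, h, sub_zero, one_div]

lemma integral_Ioc_eq_EE {t : ℝ} (ht : 0 < t) {s : ℂ} (hs : 0 < s.re) :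
    ∫ x in Ioc (0:ℝ) 1, cterm t s x = EE t 0 s := by
  have hC : IntegrableOn (fun x : ℝ => x ^ (s.re - 1)) (Ioc (0:ℝ) 1) := by
    have := intervalIntegral.intervalIntegrable_rpow' (a := 0) (b := 1) (r := s.re - 1)
      (by linarith)
    rwa [intervalIntegrable_iff_integrableOn_Ioc_of_le zero_le_one] at this
  set C : ℝ := ∫ x in Ioc (0:ℝ) 1, x ^ (s.re - 1) with hCdef
  have hC0 : 0 ≤ C :=
    setIntegral_nonneg measurableSet_Ioc (fun x hx => Real.rpow_nonneg hx.1.le _)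
  have hnormle : ∀ n : ℕ, ∫ x in Ioc (0:ℝ) 1, ‖fn t s n x‖ ≤ t^n / n.factorial * C := by
    intro n
    have : ∀ x ∈ Ioc (0:ℝ) 1, ‖fn t s n x‖ ≤ t^n / n.factorial * x ^ (s.re - 1) := by
      intro x hx
      rw [norm_fn ht.le s n hx.1]
      apply mul_le_mul_of_nonneg_left _ (by positivity)
      apply Real.rpow_le_rpow_of_exponent_ge hx.1 hx.2
      linarith [Nat.cast_nonneg (α := ℝ) n]
    calc ∫ x in Ioc (0:ℝ) 1, ‖fn t s n x‖
        ≤ ∫ x in Ioc (0:ℝ) 1, t^n / n.factorial * x ^ (s.re - 1) :=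
          setIntegral_mono_on (integrableOn_fn hs n).norm (hC.const_mul _)
            measurableSet_Ioc this
      _ = t^n / n.factorial * C := by rw [MeasureTheory.integral_const_mul]
  have key := integral_tsum (μ := volume.restrict (Ioc (0:ℝ) 1)) (f := fn t s)
    (fun n => (continuousOn_fn t s n).aestronglyMeasurable measurableSet_Ioc) ?_
  · rw [setIntegral_congr_fun measurableSet_Ioc
      (fun x hx => cterm_eq_tsum s hx.1), key]
    rw [EE]
    congr 1
    funext n
    rw [integral_fn hs n, cE]
    norm_num
  · -- lintegral bound
    have h1 : ∀ n : ℕ, ∫⁻ x, ‖fn t s n x‖ₑ ∂(volume.restrict (Ioc (0:ℝ) 1))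
        ≤ ENNReal.ofReal (t^n / n.factorial * C) := by
      intro n
      rw [← ofReal_integral_norm_eq_lintegral_enorm (integrableOn_fn hs n)]
      exact ENNReal.ofReal_le_ofReal (hnormle n)
    apply ne_top_of_le_ne_top _ (ENNReal.tsum_le_tsum h1)
    rw [← ENNReal.ofReal_tsum_of_nonneg (fun n => mul_nonneg (by positivity) hC0)
      ((Real.summable_pow_div_factorial t).mul_right C)]
    exact ENNReal.ofReal_ne_top

lemma HH_eq {t : ℝ} (ht : 0 < t) {s : ℂ} (hs : 0 < s.re) :
    HH t 0 s = ((1/t : ℝ) : ℂ) ^ s * Complex.Gamma s - EE t 0 s := by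
  have hIoi1 : IntegrableOn (cterm t s) (Ioi 1) :=
    (integrableOn_hterm ht 0 s).congr_fun (fun x hx => hterm_eq_cterm s hx) measurableSet_Ioi
  have hIoc := integrableOn_cterm_Ioc ht hs
  have hsplit : (∫ x in Ioi (0:ℝ), cterm t s x)
      = (∫ x in Ioc (0:ℝ) 1, cterm t s x) + ∫ x in Ioi (1:ℝ), cterm t s x := by
    rw [← setIntegral_union (Ioc_disjoint_Ioi le_rfl) measurableSet_Ioi hIoc hIoi1,
      Ioc_union_Ioi_eq_Ioi zero_le_one]
  have hGamma : (∫ x in Ioi (0:ℝ), cterm t s x) = ((1/t : ℝ) : ℂ) ^ s * Complex.Gamma s := by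
    have h := integral_cpow_mul_exp_neg_mul_Ioi hs ht
    rw [show ((1/t : ℝ) : ℂ) = 1/(t:ℂ) by push_cast; ring]
    rw [← h]
    rfl
  have h1 : HH t 0 s = ∫ x in Ioi (1:ℝ), cterm t s x :=
    setIntegral_congr_fun measurableSet_Ioi (fun x hx => hterm_eq_cterm s hx)
  rw [h1, ← integral_Ioc_eq_EE ht hs, ← hGamma, hsplit]
  ring


def cF (k : ℤ) (p : ℕ) (n : ℕ) : ℝ :=
  (-1)^(p+1) * p.factorial * (-1)^n / (n.factorial * ((1/2 - (k:ℝ)) + n)^(p+1))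

def FF (k : ℤ) (p : ℕ) (z : ℂ) : ℂ := ∑' n : ℕ, (cF k p n : ℂ) * z^n

lemma half_bound (k : ℤ) (n : ℕ) : (1:ℝ)/2 ≤ |(1/2 - (k:ℝ)) + n| := by
  rcases le_or_gt (k:ℝ) (n:ℝ) with h | h
  · have h1 : (1:ℝ)/2 ≤ (1/2 - (k:ℝ)) + n := by linarith
    exact le_trans h1 (le_abs_self _)
  · have h2 : (n:ℤ) < k := by exact_mod_cast h
    have h3 : (n:ℝ) ≤ (k:ℝ) - 1 := by
      have h : (n:ℤ) ≤ k - 1 := by omega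
      have h' : (n:ℝ) ≤ ((k - 1 : ℤ) : ℝ) := by exact_mod_cast h
      push_cast at h'
      linarith
    have h4 : (1/2 - (k:ℝ)) + n ≤ -(1/2) := by linarith
    calc (1:ℝ)/2 ≤ -((1/2 - (k:ℝ)) + n) := by linarith
      _ ≤ |(1/2 - (k:ℝ)) + n| := neg_le_abs _

lemma abs_cF_le (k : ℤ) (p : ℕ) (n : ℕ) :
    |cF k p n| ≤ (2^(p+1) * p.factorial) * (1 / n.factorial) := by
  have hD : ((1:ℝ)/2)^(p+1) ≤ |(1/2 - (k:ℝ)) + n|^(p+1) :=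
    pow_le_pow_left₀ (by norm_num) (half_bound k n) _
  have hDpos : (0:ℝ) < |(1/2 - (k:ℝ)) + n|^(p+1) := lt_of_lt_of_le (by positivity) hD
  have hfac : (0:ℝ) < (n.factorial : ℝ) := by exact_mod_cast n.factorial_pos
  rw [cF, abs_div]
  have hnum : |(-1:ℝ)^(p+1) * p.factorial * (-1)^n| = p.factorial := by
    rw [_root_.abs_mul, _root_.abs_mul, _root_.abs_pow, _root_.abs_pow, abs_neg, abs_one,
      one_pow, one_pow, one_mul, mul_one, Nat.abs_cast]
  have hden : |(n.factorial : ℝ) * ((1/2 - (k:ℝ)) + n)^(p+1)|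
      = n.factorial * |(1/2 - (k:ℝ)) + n|^(p+1) := by
    rw [_root_.abs_mul, Nat.abs_cast, _root_.abs_pow]
  rw [hnum, hden]
  rw [div_le_iff₀ (by positivity)]
  have key : (p.factorial : ℝ) * ((1:ℝ)/2)^(p+1) * (2^(p+1)) = p.factorial := by
    rw [div_pow, one_pow, mul_assoc]
    field_simp
  calc (p.factorial : ℝ) = (p.factorial : ℝ) * ((1:ℝ)/2)^(p+1) * (2^(p+1)) := by rw [key]
    _ ≤ (p.factorial : ℝ) * |(1/2 - (k:ℝ)) + n|^(p+1) * 2^(p+1) := by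
        apply mul_le_mul_of_nonneg_right _ (by positivity)
        exact mul_le_mul_of_nonneg_left hD (by positivity)
    _ = 2^(p+1) * p.factorial * (1/n.factorial) * (n.factorial * |(1/2 - (k:ℝ)) + n|^(p+1)) := by
        field_simp

lemma differentiable_FF (k : ℤ) (p : ℕ) : Differentiable ℂ (FF k p) := by
  intro z₀
  set R : ℝ := ‖z₀‖ + 1 with hR
  have hRpos : 0 < R := by positivity
  have hderiv : ∀ s ∈ ball (0:ℂ) R, HasDerivAt (FF k p)
      (∑' n : ℕ, (cF k p n : ℂ) * (n * s^(n-1))) s := by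
    intro s hs
    apply hasDerivAt_tsum_of_isPreconnected
      (u := fun n : ℕ => (2^(p+1) * p.factorial) * ((2*(R+1))^n / n.factorial))
      (((Real.summable_pow_div_factorial (2*(R+1))).mul_left _))
      isOpen_ball (convex_ball (0:ℂ) R).isPreconnected
      (fun n y _ => (hasDerivAt_pow n y).const_mul ((cF k p n : ℂ)))
      (fun n y hy => ?bound) (mem_ball_self hRpos) ?sum0 hs
    case bound =>
      rcases Nat.eq_zero_or_pos n with rfl | hn
      · simp
      · have hyR : ‖y‖ ≤ R := by
          rw [mem_ball, dist_zero_right] at hy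
          linarith
        have h1 : ‖(cF k p n : ℂ) * ((n:ℂ) * y^(n-1))‖
            = |cF k p n| * (n * ‖y‖^(n-1)) := by
          rw [norm_mul, norm_mul, norm_pow, Complex.norm_real, Real.norm_eq_abs,
            Complex.norm_natCast]
        rw [h1]
        have h2 : ‖y‖^(n-1) ≤ R^(n-1) := pow_le_pow_left₀ (norm_nonneg _) hyR _
        have h3 : (n:ℝ) * ‖y‖^(n-1) ≤ 2^n * (R+1)^n := by
          have hn2 : (n:ℝ) ≤ 2^n := by exact_mod_cast (Nat.lt_two_pow_self).le
          have hRn : R^(n-1) ≤ (R+1)^n := by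
            calc R^(n-1) ≤ (R+1)^(n-1) := pow_le_pow_left₀ hRpos.le (by linarith) _
              _ ≤ (R+1)^n := pow_le_pow_right₀ (by linarith) (Nat.sub_le n 1)
          calc (n:ℝ) * ‖y‖^(n-1) ≤ 2^n * R^(n-1) := by
                apply mul_le_mul hn2 h2 (by positivity) (by positivity)
            _ ≤ 2^n * (R+1)^n := by
                apply mul_le_mul_of_nonneg_left hRn (by positivity)
        calc |cF k p n| * ((n:ℝ) * ‖y‖^(n-1))
            ≤ ((2^(p+1) * p.factorial) * (1/n.factorial)) * (2^n * (R+1)^n) := by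
              apply mul_le_mul (abs_cF_le k p n) h3 (by positivity) (by positivity)
          _ = (2^(p+1) * p.factorial) * ((2*(R+1))^n / n.factorial) := by
              rw [mul_pow]
              field_simp
    case sum0 =>
      apply summable_of_ne_finset_zero (s := {0})
      intro n hn
      simp only [Finset.mem_singleton] at hn
      rw [zero_pow hn, mul_zero]
  exact ((hderiv z₀ (by rw [mem_ball, dist_zero_right]; linarith)).differentiableAt)

lemma FF_real (k : ℤ) (p : ℕ) (x : ℝ) : (FF k p x).im = 0 := by
  have h : FF k p x = ((∑' n : ℕ, cF k p n * x^n : ℝ) : ℂ) := by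
    rw [FF, Complex.ofReal_tsum]
    apply tsum_congr
    intro n
    push_cast
    ring
  rw [h, Complex.ofReal_im]


-- ============ glue lemmas ============

lemma half_bound_c (k : ℤ) (n : ℕ) : (1:ℝ)/2 ≤ ‖((1/2 - (k:ℝ) : ℝ) : ℂ) + n‖ := by
  have h : ((1/2 - (k:ℝ) : ℝ) : ℂ) + n = (((1/2 - (k:ℝ)) + n : ℝ) : ℂ) := by push_cast; ring
  rw [h, Complex.norm_real, Real.norm_eq_abs]
  exact half_bound k n

lemma s0_mem_UU (k : ℤ) : ((1/2 - (k:ℝ) : ℝ) : ℂ) ∈ UU := by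
  intro m hc
  have h := half_bound_c k m
  rw [hc] at h
  simp at h
  linarith

def GG (t : ℝ) (s : ℂ) : ℂ := Complex.Gamma s * Complex.exp ((Real.log (1/t) : ℂ) * s)

lemma cpow_GG {t : ℝ} (ht : 0 < t) (s : ℂ) :
    ((1/t : ℝ) : ℂ) ^ s * Complex.Gamma s = GG t s := by
  rw [GG, Complex.cpow_def_of_ne_zero (Complex.ofReal_ne_zero.mpr (by positivity)),
    ← Complex.ofReal_log (by positivity : (0:ℝ) ≤ 1/t)]
  ring

lemma analyticOnNhd_GG (t : ℝ) : AnalyticOnNhd ℂ (GG t) UU := by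
  apply DifferentiableOn.analyticOnNhd _ isOpen_UU
  intro s hs
  apply DifferentiableAt.differentiableWithinAt
  apply (Complex.differentiableAt_Gamma s hs).mul
  apply DifferentiableAt.cexp
  exact (differentiable_id.const_mul _).differentiableAt

lemma analyticOnNhd_EE {t : ℝ} : AnalyticOnNhd ℂ (EE t 0) UU := by
  apply DifferentiableOn.analyticOnNhd _ isOpen_UU
  intro s hs
  obtain ⟨ε, hε, _, hb⟩ := exists_ball_bound hs
  exact (hasDerivAt_EE hε 0 hb (mem_ball_self hε)).differentiableAt.differentiableWithinAt

lemma HH_eqOn {t : ℝ} (ht : 0 < t) :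
    Set.EqOn (HH t 0) (fun s => GG t s - EE t 0 s) UU := by
  have hana_H : AnalyticOnNhd ℂ (HH t 0) UU := by
    apply DifferentiableOn.analyticOnNhd _ isOpen_UU
    exact fun s _ => (hasDerivAt_HH ht 0 s).differentiableAt.differentiableWithinAt
  apply hana_H.eqOn_of_preconnected_of_eventuallyEq ((analyticOnNhd_GG t).sub analyticOnNhd_EE)
    isPreconnected_UU one_mem_UU
  have hopen : IsOpen {s : ℂ | 0 < s.re} := isOpen_lt continuous_const Complex.continuous_re
  filter_upwards [hopen.mem_nhds (by simp : (1:ℂ) ∈ {s : ℂ | 0 < s.re})] with s hs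
  rw [HH_eq ht hs, cpow_GG ht]
  rfl

lemma claim_ball {t : ℝ} (ht : 0 < t) {ε : ℝ} (hε : 0 < ε) {s₀ : ℂ}
    (hb : ∀ s ∈ ball s₀ ε, ∀ n : ℕ, ε ≤ ‖s + n‖) (q : ℕ) :
    Set.EqOn (iteratedDeriv q (HH t 0))
      (fun s => iteratedDeriv q (GG t) s - EE t q s) (ball s₀ ε) := by
  induction q with
  | zero =>
    intro s hs
    simpa [iteratedDeriv_zero] using HH_eqOn ht (mem_UU_of_ball hε hb hs)
  | succ q ih =>
    intro s hs
    have hev : iteratedDeriv q (HH t 0) =ᶠ[𝓝 s]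
        (fun s => iteratedDeriv q (GG t) s - EE t q s) :=
      Filter.eventuallyEq_of_mem (isOpen_ball.mem_nhds hs) ih
    have hdG : DifferentiableAt ℂ (iteratedDeriv q (GG t)) s :=
      ((analyticOnNhd_iteratedDeriv (analyticOnNhd_GG t) q) s
        (mem_UU_of_ball hε hb hs)).differentiableAt
    have hdE := hasDerivAt_EE (t := t) hε q hb hs
    show iteratedDeriv (q+1) (HH t 0) s = _
    rw [iteratedDeriv_succ, hev.deriv_eq, deriv_fun_sub hdG hdE.differentiableAt, hdE.deriv,
      ← iteratedDeriv_succ]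

lemma FF_eq_neg_EE (k : ℤ) (p : ℕ) {t : ℝ} (ht : 0 < t) :
    FF k p t = -(EE t p ((1/2 - (k:ℝ) : ℝ) : ℂ)) := by
  rw [EE, ← tsum_neg, FF]
  apply tsum_congr
  intro n
  have hne : ((1/2 - (k:ℝ)) + n) ≠ 0 := by
    have h := half_bound k n
    intro h0
    rw [h0] at h
    simp at h
    linarith
  have key : cF k p n * t^n
      = -((-1)^p * p.factorial * (-t)^n / n.factorial * ((((1/2 - (k:ℝ)) + n))^(p+1))⁻¹) := by
    rw [cF, neg_pow t n, pow_succ (-1:ℝ) p]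
    have hfac : (n.factorial : ℝ) ≠ 0 := by exact_mod_cast n.factorial_ne_zero
    field_simp
  calc (cF k p n : ℂ) * (t:ℂ)^n = ((cF k p n * t^n : ℝ) : ℂ) := by push_cast; ring
    _ = ((-((-1)^p * p.factorial * (-t)^n / n.factorial
          * ((((1/2 - (k:ℝ)) + n))^(p+1))⁻¹) : ℝ) : ℂ) := by rw [key]
    _ = -(cE t p n * (((1/2 - (k:ℝ) : ℝ) : ℂ) + n) ^ (-(p+1) : ℤ)) := by
        rw [cE, show ((1/2 - (k:ℝ) : ℝ) : ℂ) + n = (((1/2 - (k:ℝ)) + n : ℝ) : ℂ) by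
          push_cast; ring]
        rw [show (-(p+1:ℤ)) = -((p+1:ℕ):ℤ) by push_cast; ring, zpow_neg, zpow_natCast]
        push_cast
        ring

lemma iteratedDeriv_GG_s0 (k : ℤ) (p : ℕ) {t : ℝ} (ht : 0 < t) :
    iteratedDeriv p (GG t) ((1/2 - (k:ℝ) : ℝ) : ℂ)
      = ((t ^ ((k:ℝ) - 1/2) * (Real.Gamma (1/2 - (k:ℝ)) * Real.log (1/t) ^ p
          + ∑ j ∈ Finset.range p, ((p.choose (p-j) : ℝ)
              * (iteratedDeriv (p-j) Complex.Gamma ((1/2 - (k:ℝ) : ℝ) : ℂ)).re)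
              * Real.log (1/t) ^ j) : ℝ) : ℂ) := by
  have hGG : GG t = fun z => Complex.Gamma z * Complex.exp ((Real.log (1/t) : ℂ) * z) := rfl
  rw [hGG, leibniz_exp isOpen_UU analyticOnNhd_Gamma _ p _ (s0_mem_UU k)]
  set L : ℝ := Real.log (1/t) with hL
  set s0 : ℝ := 1/2 - (k:ℝ) with hs0
  have hexp : Complex.exp ((L:ℂ) * (s0:ℂ)) = ((t ^ ((k:ℝ) - 1/2) : ℝ) : ℂ) := by
    rw [show (L:ℂ) * (s0:ℂ) = ((L * s0 : ℝ) : ℂ) by push_cast; ring, ← Complex.ofReal_exp]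
    congr 1
    rw [← Real.rpow_def_of_pos (by positivity : (0:ℝ) < 1/t) s0]
    rw [one_div, Real.inv_rpow ht.le, ← Real.rpow_neg ht.le]
    congr 1
    rw [hs0]; ring
  have hsum : (∑ i ∈ Finset.range (p+1), (p.choose i : ℂ) * (L:ℂ)^(p-i)
        * iteratedDeriv i Complex.Gamma (s0:ℂ))
      = ((Real.Gamma s0 * L^p + ∑ j ∈ Finset.range p, ((p.choose (p-j) : ℝ)
          * (iteratedDeriv (p-j) Complex.Gamma (s0:ℂ)).re) * L^j : ℝ) : ℂ) := by
    rw [Finset.sum_range_succ']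
    have h0 : (p.choose 0 : ℂ) * (L:ℂ)^(p-0) * iteratedDeriv 0 Complex.Gamma (s0:ℂ)
        = ((Real.Gamma s0 * L^p : ℝ) : ℂ) := by
      rw [Nat.choose_zero_right, iteratedDeriv_zero, Complex.Gamma_ofReal, Nat.sub_zero]
      push_cast
      ring
    have h1 : ∑ i ∈ Finset.range p, (p.choose (i+1) : ℂ) * (L:ℂ)^(p-(i+1))
          * iteratedDeriv (i+1) Complex.Gamma (s0:ℂ)
        = ((∑ j ∈ Finset.range p, ((p.choose (p-j) : ℝ)
            * (iteratedDeriv (p-j) Complex.Gamma (s0:ℂ)).re) * L^j : ℝ) : ℂ) := by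
      calc ∑ i ∈ Finset.range p, (p.choose (i+1) : ℂ) * (L:ℂ)^(p-(i+1))
            * iteratedDeriv (i+1) Complex.Gamma (s0:ℂ)
          = ∑ i ∈ Finset.range p, ((((p.choose (p-(p-1-i)) : ℝ)
              * (iteratedDeriv (p-(p-1-i)) Complex.Gamma (s0:ℂ)).re) * L^(p-1-i) : ℝ) : ℂ) := by
            apply Finset.sum_congr rfl
            intro i hi
            rw [Finset.mem_range] at hi
            have e1 : p - (p-1-i) = i+1 := by omega
            have e2 : p - 1 - i = p - (i+1) := by omega
            rw [e1, e2]
            rw [iteratedDeriv_Gamma_real (i+1) s0 (s0_mem_UU k)]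
            push_cast
            simp only [Complex.ofReal_re]
            ring
        _ = ∑ j ∈ Finset.range p, ((((p.choose (p-j) : ℝ)
              * (iteratedDeriv (p-j) Complex.Gamma (s0:ℂ)).re) * L^j : ℝ) : ℂ) :=
            Finset.sum_range_reflect (fun j => ((((p.choose (p-j) : ℝ)
              * (iteratedDeriv (p-j) Complex.Gamma (s0:ℂ)).re) * L^j : ℝ) : ℂ)) p
        _ = _ := by norm_cast
    rw [h0, h1]
    push_cast
    ring
  rw [hexp, hsum]
  push_cast
  ring

theorem laplace_integral_expansion_half_integer (k : ℤ) (p : ℕ) :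
    ∃ (a : ℕ → ℝ) (F : ℂ → ℂ), Differentiable ℂ F ∧ (∀ x : ℝ, (F x).im = 0) ∧
      ∀ t : ℝ, 0 < t →
        (∫ x in Set.Ioi (1 : ℝ), Real.exp (-t * x) * x ^ (-(k : ℝ) - 1/2) * Real.log x ^ p) =
          t ^ ((k : ℝ) - 1/2) *
            (Real.Gamma (1/2 - (k : ℝ)) * Real.log (1 / t) ^ p +
              ∑ j ∈ Finset.range p, a j * Real.log (1 / t) ^ j) +
          (F t).re := by
  refine ⟨fun j => (p.choose (p-j) : ℝ)
      * (iteratedDeriv (p-j) Complex.Gamma ((1/2 - (k:ℝ) : ℝ) : ℂ)).re,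
    FF k p, differentiable_FF k p, FF_real k p, ?_⟩
  intro t ht
  obtain ⟨ε, hε, hε2, hb⟩ := exists_ball_bound (s0_mem_UU k)
  have h1 : HH t p ((1/2 - (k:ℝ) : ℝ) : ℂ)
      = iteratedDeriv p (GG t) ((1/2 - (k:ℝ) : ℝ) : ℂ) - EE t p ((1/2 - (k:ℝ) : ℝ) : ℂ) := by
    rw [← iteratedDeriv_HH ht p]
    exact claim_ball ht hε hb p (mem_ball_self hε)
  have h2 : HH t p ((1/2 - (k:ℝ) : ℝ) : ℂ)
      = ((∫ x in Set.Ioi (1 : ℝ), Real.exp (-t * x) * x ^ (-(k : ℝ) - 1/2)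
          * Real.log x ^ p : ℝ) : ℂ) := by
    rw [HH, show ((∫ x in Set.Ioi (1 : ℝ), Real.exp (-t * x) * x ^ (-(k : ℝ) - 1/2)
          * Real.log x ^ p : ℝ) : ℂ)
        = ∫ x in Set.Ioi (1 : ℝ), ((Real.exp (-t * x) * x ^ (-(k : ℝ) - 1/2)
          * Real.log x ^ p : ℝ) : ℂ) from (integral_ofReal).symm]
    apply setIntegral_congr_fun measurableSet_Ioi
    intro x hx
    have hx0 : (0:ℝ) < x := lt_trans one_pos hx
    rw [hterm]
    rw [show (((1/2 - (k:ℝ) : ℝ) : ℂ) - 1) = ((1/2 - (k:ℝ) - 1 : ℝ) : ℂ) by push_cast; ring]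
    rw [show ((1/2 - (k:ℝ) - 1 : ℝ) : ℂ) * (Real.log x : ℂ)
        = (((1/2 - (k:ℝ) - 1) * Real.log x : ℝ) : ℂ) by push_cast; ring]
    rw [← Complex.ofReal_exp]
    rw [show Real.exp ((1/2 - (k:ℝ) - 1) * Real.log x) = x ^ (-(k:ℝ) - 1/2) by
      rw [Real.rpow_def_of_pos hx0]
      congr 1
      ring]
    push_cast
    ring
  have h4 : FF k p t = -(EE t p ((1/2 - (k:ℝ) : ℝ) : ℂ)) := FF_eq_neg_EE k p ht
  have h5 : ((∫ x in Set.Ioi (1 : ℝ), Real.exp (-t * x) * x ^ (-(k : ℝ) - 1/2)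
        * Real.log x ^ p : ℝ) : ℂ)
      = ((t ^ ((k:ℝ) - 1/2) * (Real.Gamma (1/2 - (k:ℝ)) * Real.log (1/t) ^ p
          + ∑ j ∈ Finset.range p, ((p.choose (p-j) : ℝ)
              * (iteratedDeriv (p-j) Complex.Gamma ((1/2 - (k:ℝ) : ℝ) : ℂ)).re)
              * Real.log (1/t) ^ j) : ℝ) : ℂ) + FF k p t := by
    rw [← h2, h1, iteratedDeriv_GG_s0 k p ht, h4]
    ring
  have h6 := congrArg Complex.re h5
  rw [Complex.ofReal_re, Complex.add_re, Complex.ofReal_re] at h6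
  exact h6

end LaplaceHalfAux
end
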